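/- arXiv:2011.03008 — 15 statements merged into one kernel-verified Lean document; each statement's English description precedes it below -/
import Mathlib

section
/- Let A be a commutative ring, S ⊆ A a multiplicatively closed subset, and N a submodule of an A-module M. Then M is S-noetherian if and only if both N and M/N are S-noetherian. -/
/-- A submodule `N` is `S`-finite if there is a finitely generated submodule `F ⊆ N`
and `s ∈ S` with `N • s ⊆ F`. -/
def SFin {A : Type*} [CommRing A] (S : Submonoid A) {M : Type*} [AddCommGroup M]
    [Module A M] (N : Submodule A M) : Prop :=
  ∃ F : Submodule A M, F.FG ∧ F ≤ N ∧ ∃ s ∈ S, ∀ x ∈ N, s • x ∈ F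

/-- A module `M` is `S`-noetherian if every submodule is `S`-finite. -/
def SNoeth {A : Type*} [CommRing A] (S : Submonoid A) (M : Type*) [AddCommGroup M]
    [Module A M] : Prop :=
  ∀ N : Submodule A M, SFin S N

theorem stmt2 {A : Type*} [CommRing A] (S : Submonoid A) {M : Type*} [AddCommGroup M]
    [Module A M] (N : Submodule A M) :
    SNoeth S M ↔ SNoeth S N ∧ SNoeth S (M ⧸ N) := by
  constructor
  · intro h
    constructor
    · intro Q
      obtain ⟨F, hFG, hFle, s, hs, hsx⟩ := h (Q.map N.subtype)
      refine ⟨F.comap N.subtype, ?_, ?_, s, hs, ?_⟩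
      · apply Submodule.fg_of_fg_map_injective N.subtype N.injective_subtype
        have : F ≤ LinearMap.range N.subtype := by
          rw [N.range_subtype]
          exact hFle.trans (Submodule.map_subtype_le _ _)
        rwa [Submodule.map_comap_eq_self this]
      · intro x hx
        obtain ⟨y, hy, hyx⟩ := hFle hx
        rwa [show y = x from Subtype.ext hyx] at hy
      · intro x hx
        exact hsx (x : M) ⟨x, hx, rfl⟩
    · intro Q
      obtain ⟨F, hFG, hFle, s, hs, hsx⟩ := h (Q.comap N.mkQ)
      refine ⟨F.map N.mkQ, hFG.map _, Submodule.map_le_iff_le_comap.mpr hFle, s, hs, ?_⟩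
      intro y hy
      obtain ⟨x, rfl⟩ := N.mkQ_surjective y
      exact ⟨s • x, hsx x hy, map_smul _ _ _⟩
  · rintro ⟨hN, hQ⟩ P
    obtain ⟨F₁, hF₁fg, hF₁le, s₁, hs₁, hsx₁⟩ := hN (P.comap N.subtype)
    obtain ⟨F₂, hF₂fg, hF₂le, s₂, hs₂, hsx₂⟩ := hQ (P.map N.mkQ)
    obtain ⟨T, hT⟩ := hF₂fg
    have key : ∀ t : (T : Set (M ⧸ N)), ∃ x, x ∈ P ∧ N.mkQ x = (t : M ⧸ N) := by
      intro t
      have ht : (t : M ⧸ N) ∈ Submodule.map N.mkQ P :=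
        hF₂le (hT ▸ Submodule.subset_span t.2)
      obtain ⟨x, hx, hxe⟩ := ht
      exact ⟨x, hx, hxe⟩
    choose g hgP hg using key
    set F : Submodule A M := F₁.map N.subtype ⊔ Submodule.span A (Set.range g) with hF
    have hspanle : Submodule.span A (Set.range g) ≤ P := by
      rw [Submodule.span_le]
      rintro _ ⟨t, rfl⟩
      exact hgP t
    refine ⟨F, ?_, ?_, s₁ * s₂, S.mul_mem hs₁ hs₂, ?_⟩
    · exact (hF₁fg.map _).sup (Submodule.fg_span (Set.finite_range g))
    · refine sup_le ?_ hspanle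
      rintro _ ⟨y, hy, rfl⟩
      exact hF₁le hy
    · intro x hx
      have h₂ : s₂ • N.mkQ x ∈ F₂ := hsx₂ _ ⟨x, hx, rfl⟩
      have hTsub : (T : Set (M ⧸ N)) ⊆ N.mkQ '' Set.range g := by
        intro t ht
        exact ⟨g ⟨t, ht⟩, ⟨⟨t, ht⟩, rfl⟩, hg ⟨t, ht⟩⟩
      have h₂' : s₂ • N.mkQ x ∈ (Submodule.span A (Set.range g)).map N.mkQ := by
        rw [Submodule.map_span]
        exact Submodule.span_mono hTsub (hT ▸ h₂)
      obtain ⟨y, hy, hye⟩ := h₂'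
      have hdiff : s₂ • x - y ∈ N := by
        rw [← N.ker_mkQ, LinearMap.mem_ker, map_sub, map_smul, hye, sub_self]
      have hdiffP : s₂ • x - y ∈ P := P.sub_mem (P.smul_mem _ hx) (hspanle hy)
      have h₁ : s₁ • (⟨s₂ • x - y, hdiff⟩ : N) ∈ F₁ := hsx₁ _ hdiffP
      have h₁' : s₁ • (s₂ • x - y) ∈ F₁.map N.subtype :=
        ⟨s₁ • (⟨s₂ • x - y, hdiff⟩ : N), h₁, rfl⟩
      have : (s₁ * s₂) • x = s₁ • (s₂ • x - y) + s₁ • y := by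
        rw [smul_sub, mul_smul]; abel
      rw [this]
      exact F.add_mem (le_sup_left (α := Submodule A M) h₁')
        (le_sup_right (α := Submodule A M)
          ((Submodule.span A (Set.range g)).smul_mem _ hy))
end

section
/- Let f : A → B be a surjective-on-ideals ring homomorphism (every ideal of B is of the form f(a)·B for some ideal a of A) and S ⊆ A a multiplicatively closed subset. If A is S-noetherian, then B is f(S)-noetherian. -/
theorem stmt4 {A B : Type*} [CommRing A] [CommRing B] (f : A →+* B)
    (hf : ∀ J : Ideal B, ∃ I : Ideal A, J = I.map f)
    (S : Submonoid A) (hA : SNoeth S A) : SNoeth (S.map f) B := by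
  intro J
  obtain ⟨I, rfl⟩ := hf J
  obtain ⟨F, hFG, hFI, s, hs, hsF⟩ := hA I
  refine ⟨Ideal.map f F, Ideal.FG.map hFG f, Ideal.map_mono hFI, f s, ⟨s, hs, rfl⟩, ?_⟩
  intro x hx
  have hx' : x ∈ Submodule.span B (f '' I) := hx
  clear hx
  induction hx' using Submodule.span_induction with
  | mem y hy =>
    obtain ⟨a, ha, rfl⟩ := hy
    have : f s • f a = f (s * a) := by simp [smul_eq_mul, map_mul]
    rw [this]
    exact Ideal.mem_map_of_mem f (hsF a ha)
  | zero => simp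
  | add y z _ _ hy hz =>
    rw [smul_add]; exact (Ideal.map f F).add_mem hy hz
  | smul b y _ hy =>
    have : f s • b • y = b • (f s • y) := by
      simp only [smul_eq_mul]; ring
    rw [this]
    exact Submodule.smul_mem _ b hy
end

section
/- If A is a commutative ring, S ⊆ A multiplicatively closed, a an ideal of A, then the quotient A/a is S̄-noetherian whenever A is S-noetherian, where S̄ is the image of S in A/a. -/
theorem stmt5 {A : Type*} [CommRing A] (S : Submonoid A) (a : Ideal A)
    (hA : SNoeth S A) : SNoeth (S.map (Ideal.Quotient.mk a)) (A ⧸ a) := by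
  intro N
  obtain ⟨F, hFG, hFle, s, hs, hsx⟩ := hA (Ideal.comap (Ideal.Quotient.mk a) N)
  refine ⟨Ideal.map (Ideal.Quotient.mk a) F, Ideal.FG.map hFG _, ?_, Ideal.Quotient.mk a s,
    ⟨s, hs, rfl⟩, ?_⟩
  · exact Ideal.map_le_iff_le_comap.mpr hFle
  · intro x hx
    obtain ⟨y, rfl⟩ := Ideal.Quotient.mk_surjective x
    have : y ∈ Ideal.comap (Ideal.Quotient.mk a) N := hx
    have := hsx y this
    simpa [← map_mul] using Ideal.mem_map_of_mem (Ideal.Quotient.mk a) this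
end

section
/- Let A be a commutative ring, S ⊆ A multiplicatively closed, M an S-finite A-module, and N ⊆ M a submodule maximal among the submodules of M that are not S-finite. Then the ideal (N : M) = {a ∈ A : M·a ⊆ N} is a prime ideal of A. -/
theorem stmt6 {A : Type*} [CommRing A] (S : Submonoid A) {M : Type*} [AddCommGroup M]
    [Module A M] (hM : SFin S (⊤ : Submodule A M)) (N : Submodule A M)
    (hN : ¬ SFin S N) (hmax : ∀ N' : Submodule A M, N < N' → SFin S N') :
    (N.colon ⊤).IsPrime := by
  constructor
  · -- colon ≠ ⊤
    intro h
    apply hN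
    have hNtop : N = ⊤ := by
      rw [eq_top_iff]
      intro x _
      have h1 : (1 : A) ∈ N.colon ⊤ := h ▸ Submodule.mem_top
      simpa using Submodule.mem_colon.mp h1 x trivial
    rw [hNtop]; exact hM
  · intro a b hab
    by_contra hcon
    push_neg at hcon
    obtain ⟨ha, hb⟩ := hcon
    rw [Submodule.mem_colon] at ha hb
    push_neg at ha hb
    obtain ⟨ma, -, hma⟩ := ha
    obtain ⟨mb, -, hmb⟩ := hb
    set φ : M →ₗ[A] M := LinearMap.lsmul A M a with hφ
    set Na : Submodule A M := N ⊔ LinearMap.range φ with hNa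
    set Ca : Submodule A M := Submodule.comap φ N with hCa
    have hNleCa : N ≤ Ca := fun x hx => N.smul_mem a hx
    have hltNa : N < Na := by
      refine lt_of_le_of_ne le_sup_left (fun h => hma ?_)
      rw [h]
      exact Submodule.mem_sup_right ⟨ma, rfl⟩
    have hltCa : N < Ca := by
      refine lt_of_le_of_ne hNleCa (fun h => hmb ?_)
      rw [h]
      show a • (b • mb) ∈ N
      rw [← mul_smul]
      exact Submodule.mem_colon.mp hab mb trivial
    obtain ⟨F, hFfg, hFle, s, hsS, hsF⟩ := hmax Na hltNa
    obtain ⟨G, hGfg, hGle, t, htS, htG⟩ := hmax Ca hltCa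
    obtain ⟨T, hT⟩ := hFfg
    have hdecomp : ∀ f, f ∈ (T : Set M) → ∃ n, n ∈ N ∧ ∃ m, f = n + a • m := by
      intro f hf
      have hfNa : f ∈ Na := hFle (hT ▸ Submodule.subset_span hf)
      rw [hNa, Submodule.mem_sup] at hfNa
      obtain ⟨n, hn, z, hz, hfz⟩ := hfNa
      obtain ⟨m, rfl⟩ := hz
      exact ⟨n, hn, m, hfz.symm⟩
    choose! nf hnf mf hmf using hdecomp
    set F'' : Submodule A M := Submodule.span A (nf '' (T : Set M)) with hF''
    set F' : Submodule A M := F'' ⊔ Submodule.map φ G with hF'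
    apply hN
    refine ⟨F', ?_, ?_, t * s, S.mul_mem htS hsS, ?_⟩
    · exact Submodule.FG.sup (Submodule.fg_span (T.finite_toSet.image nf)) (hGfg.map φ)
    · refine sup_le ?_ ?_
      · rw [hF'', Submodule.span_le]
        rintro _ ⟨f, hf, rfl⟩
        exact (hnf f hf : nf f ∈ N)
      · rintro _ ⟨g, hg, rfl⟩
        exact hGle hg
    · intro x hx
      have hsx : s • x ∈ F := hsF x (le_sup_left (a := N) (b := LinearMap.range φ) hx)
      rw [← hT, Submodule.mem_span_finset] at hsx
      obtain ⟨c, -, hc⟩ := hsx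
      set n0 : M := ∑ f ∈ T, c f • nf f with hn0
      set m0 : M := ∑ f ∈ T, c f • mf f with hm0
      have hkey : s • x = n0 + a • m0 := by
        rw [← hc, hn0, hm0, Finset.smul_sum, ← Finset.sum_add_distrib]
        refine Finset.sum_congr rfl (fun f hf => ?_)
        calc c f • f = c f • (nf f + a • mf f) := by rw [← hmf f hf]
          _ = c f • nf f + a • (c f • mf f) := by rw [smul_add, smul_comm]
      have hn0N : n0 ∈ N := by
        refine Submodule.sum_mem _ (fun f hf => N.smul_mem _ (hnf f hf))
      have hn0F'' : n0 ∈ F'' := by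
        refine Submodule.sum_mem _ (fun f hf => Submodule.smul_mem _ _ ?_)
        exact Submodule.subset_span ⟨f, hf, rfl⟩
      have hm0Ca : m0 ∈ Ca := by
        show a • m0 ∈ N
        have : a • m0 = s • x - n0 := by rw [hkey]; abel
        rw [this]
        exact Submodule.sub_mem _ (N.smul_mem s hx) hn0N
      have htm0 : t • m0 ∈ G := htG m0 hm0Ca
      have : (t * s) • x = t • n0 + a • (t • m0) := by
        rw [mul_smul, hkey, smul_add, smul_comm t a m0]
      rw [this]
      exact Submodule.add_mem _
        (Submodule.mem_sup_left (F''.smul_mem t hn0F''))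
        (Submodule.mem_sup_right ⟨t • m0, htm0, rfl⟩)
end

section
/- Let A be a commutative ring, S ⊆ A multiplicatively closed, M an S-finite A-module, and N ⊆ M maximal among the submodules of M that are not S-finite. Then N is a prime submodule of M: whenever m ∈ M and a ∈ A satisfy m·a ∈ N, either m ∈ N or a ∈ (N : M). -/
theorem stmt7 {A : Type*} [CommRing A] (S : Submonoid A) {M : Type*} [AddCommGroup M]
    [Module A M] (hM : SFin S (⊤ : Submodule A M)) (N : Submodule A M)
    (hN : ¬ SFin S N) (hmax : ∀ N' : Submodule A M, N < N' → SFin S N') :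
    ∀ (m : M) (a : A), a • m ∈ N → m ∈ N ∨ ∀ x : M, a • x ∈ N := by
  intro m a ham
  by_contra h
  push_neg at h
  obtain ⟨hm, x₀, hx₀⟩ := h
  classical
  set φ : M →ₗ[A] M := a • LinearMap.id with hφ
  have hφapp : ∀ x : M, φ x = a • x := fun x => rfl
  have hN1 : N < N ⊔ Submodule.map φ ⊤ := by
    refine lt_of_le_of_ne le_sup_left ?_
    intro h1
    apply hx₀
    rw [h1]
    exact Submodule.mem_sup_right ⟨x₀, trivial, rfl⟩
  have hN2le : N ≤ N.comap φ := fun x hx => by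
    simpa [hφapp] using N.smul_mem a hx
  have hN2 : N < N.comap φ := by
    refine lt_of_le_of_ne hN2le ?_
    intro h2
    apply hm
    have hmem : m ∈ N.comap φ := by simpa [hφapp] using ham
    rw [← h2] at hmem
    exact hmem
  obtain ⟨F, hFfg, hFle, s, hs, hsF⟩ := hmax _ hN1
  obtain ⟨G, hGfg, hGle, t, ht, htG⟩ := hmax _ hN2
  obtain ⟨T, hT⟩ := hFfg
  have hdec : ∀ f ∈ F, ∃ n ∈ N, ∃ x : M, n + a • x = f := by
    intro f hf
    have hf' := hFle hf
    rw [Submodule.mem_sup] at hf'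
    obtain ⟨nn, hn, z, hz, hnz⟩ := hf'
    obtain ⟨x, -, rfl⟩ := hz
    exact ⟨nn, hn, x, by simpa [hφapp] using hnz⟩
  choose! n hnN xf hxf using hdec
  apply hN
  refine ⟨Submodule.span A (n '' ↑T) ⊔ Submodule.map φ G, ?_, ?_, t * s,
    S.mul_mem ht hs, ?_⟩
  · exact Submodule.FG.sup (Submodule.fg_span (T.finite_toSet.image n)) (hGfg.map φ)
  · refine sup_le (Submodule.span_le.2 ?_) ?_
    · rintro _ ⟨f, hf, rfl⟩
      exact hnN f (hT ▸ Submodule.subset_span hf)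
    · rintro _ ⟨g, hg, rfl⟩
      simpa [hφapp] using hGle hg
  · intro z hz
    have hsz : s • z ∈ F := hsF z (Submodule.mem_sup_left hz)
    rw [← hT, Submodule.mem_span_finset] at hsz
    obtain ⟨c, -, hc⟩ := hsz
    set y := ∑ f ∈ T, c f • xf f with hy
    have hfmem : ∀ f ∈ T, f ∈ F := fun f hf => hT ▸ Submodule.subset_span hf
    have hceq : s • z = (∑ f ∈ T, c f • n f) + a • y := by
      rw [hy, Finset.smul_sum, ← Finset.sum_add_distrib, ← hc]
      refine Finset.sum_congr rfl fun f hf => ?_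
      rw [smul_comm a (c f) (xf f), ← smul_add, hxf f (hfmem f hf)]
    have hay : a • y ∈ N := by
      have hsum : (∑ f ∈ T, c f • n f) ∈ N :=
        Submodule.sum_mem _ fun f hf => N.smul_mem _ (hnN f (hfmem f hf))
      have hsub : s • z - ∑ f ∈ T, c f • n f ∈ N :=
        N.sub_mem (N.smul_mem s hz) hsum
      rwa [hceq, add_sub_cancel_left] at hsub
    have hyG : t • y ∈ G := htG y (by simpa [hφapp] using hay)
    have hts : (t * s) • z = (∑ f ∈ T, c f • t • n f) + a • t • y := by
      rw [mul_smul, hceq, smul_add, Finset.smul_sum, smul_comm a t y]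
      congr 1
      exact Finset.sum_congr rfl fun f hf => smul_comm t (c f) (n f)
    rw [hts]
    exact Submodule.add_mem _
      (Submodule.mem_sup_left (Submodule.sum_mem _ fun f hf =>
        Submodule.smul_mem _ _ (Submodule.smul_mem _ _
          (Submodule.subset_span ⟨f, hf, rfl⟩))))
      (Submodule.mem_sup_right ⟨t • y, hyG, rfl⟩)
end

section
/- (Relative Cohen theorem) Let A be a commutative ring and S ⊆ A a multiplicatively closed subset. Then A is S-noetherian if and only if every prime ideal p of A with p ∩ S = ∅ is S-finite. -/
theorem stmt8 {A : Type*} [CommRing A] (S : Submonoid A) :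
    SNoeth S A ↔ ∀ p : Ideal A, p.IsPrime → (∀ s ∈ S, s ∉ p) → SFin S p := by
  constructor
  · intro h p _ _
    exact h p
  · intro H
    by_contra hne
    simp only [SNoeth, not_forall] at hne
    obtain ⟨N, hN⟩ := hne
    have hzorn : ∀ c ⊆ {I : Ideal A | ¬ SFin S I}, IsChain (· ≤ ·) c → ∀ y ∈ c,
        ∃ ub ∈ {I : Ideal A | ¬ SFin S I}, ∀ z ∈ c, z ≤ ub := by
      intro c hcs hchain y hy
      refine ⟨sSup c, ?_, fun z hz => le_sSup hz⟩
      rintro ⟨F, hFfg, hFle, s, hs, hsx⟩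
      have hcmp := (Submodule.fg_iff_compact F).mp hFfg
      rw [CompleteLattice.isCompactElement_iff_le_of_directed_sSup_le] at hcmp
      obtain ⟨I, hIc, hFI⟩ := hcmp c ⟨y, hy⟩ hchain.directedOn hFle
      exact hcs hIc ⟨F, hFfg, hFI, s, hs, fun x hx => hsx x (le_sSup hIc hx)⟩
    obtain ⟨p, -, hp⟩ := zorn_le_nonempty₀ {I : Ideal A | ¬ SFin S I} hzorn N hN
    have hpnot : ¬ SFin S p := hp.1
    have hpmax : ∀ z : Ideal A, ¬ SFin S z → p ≤ z → z = p := fun z hz hpz =>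
      le_antisymm (hp.2 hz hpz) hpz
    have hpP : p.IsPrime := by
      constructor
      · rintro rfl
        exact hpnot ⟨⊤, ⟨{1}, by simp⟩, le_rfl, 1, S.one_mem, fun x _ => trivial⟩
      · intro a b hab
        by_contra hcon
        push_neg at hcon
        obtain ⟨ha, hb⟩ := hcon
        have h1 : SFin S (p ⊔ Ideal.span {a}) := by
          by_contra h
          exact ha ((hpmax _ h le_sup_left) ▸
            Ideal.mem_sup_right (Ideal.mem_span_singleton_self a))
        set q := p.colon (Ideal.span {a}) with hq
        have hpq : p ≤ q := fun x hx =>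
          Ideal.mem_colon_span_singleton.mpr (Ideal.mul_mem_right a _ hx)
        have h2 : SFin S q := by
          by_contra h
          exact hb ((hpmax _ h hpq) ▸ Ideal.mem_colon_span_singleton.mpr (mul_comm a b ▸ hab))
        obtain ⟨F, hFfg, hFle, s, hs, hsF⟩ := h1
        obtain ⟨K, hKfg, hKle, t, ht, htK⟩ := h2
        obtain ⟨T, hT⟩ := hFfg
        have hTF : ∀ c ∈ T, c ∈ F := fun c hc => hT ▸ Submodule.subset_span hc
        have hdec : ∀ c : A, ∃ u v : A, (c ∈ F → u ∈ p ∧ c = u + a * v) := by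
          intro c
          by_cases hc : c ∈ F
          · obtain ⟨u, hu, w, hw, huw⟩ := Submodule.mem_sup.mp (hFle hc)
            obtain ⟨v, rfl⟩ := Ideal.mem_span_singleton'.mp hw
            exact ⟨u, v, fun _ => ⟨hu, by rw [← huw]; ring⟩⟩
          · exact ⟨0, 0, fun h => absurd h hc⟩
        choose P X hPX using hdec
        refine hpnot ⟨Ideal.span (P '' ↑T) ⊔ Ideal.span {a} * K, ?_, ?_, s * t,
          S.mul_mem hs ht, ?_⟩
        · exact Submodule.FG.sup (Submodule.fg_span ((T.finite_toSet).image P))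
            (Submodule.FG.mul (Submodule.fg_span (Set.finite_singleton a)) hKfg)
        · refine sup_le ?_ ?_
          · rw [Ideal.span_le]
            rintro _ ⟨c, hc, rfl⟩
            exact (hPX c (hTF c hc)).1
          · rw [Ideal.mul_le]
            intro r hr k hk
            obtain ⟨u, rfl⟩ := Ideal.mem_span_singleton'.mp hr
            have hk' : k ∈ p.colon (Ideal.span {a}) := hKle hk
            have hka : k * a ∈ p := Ideal.mem_colon_span_singleton.mp hk'
            have := Ideal.mul_mem_left _ u hka
            rwa [show u * (k * a) = u * a * k by ring] at this
        · intro x hx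
          have hsxF : s * x ∈ F := by
            have := hsF x (Ideal.mem_sup_left hx)
            rwa [smul_eq_mul] at this
          rw [← hT] at hsxF
          obtain ⟨f, -, hf⟩ := Submodule.mem_span_finset.mp hsxF
          have key : s * x = (∑ c ∈ T, f c * P c) + a * (∑ c ∈ T, f c * X c) := by
            rw [← hf, Finset.mul_sum, ← Finset.sum_add_distrib]
            refine Finset.sum_congr rfl fun c hc => ?_
            have hc2 := (hPX c (hTF c hc)).2
            rw [smul_eq_mul]
            calc f c * c = f c * (P c + a * X c) := by rw [← hc2]
              _ = f c * P c + a * (f c * X c) := by ring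
          have hsumP : (∑ c ∈ T, f c * P c) ∈ Ideal.span (P '' ↑T) := by
            refine Ideal.sum_mem _ fun c hc => ?_
            exact Ideal.mul_mem_left _ _ (Ideal.subset_span ⟨c, hc, rfl⟩)
          have hsumXq : (∑ c ∈ T, f c * X c) ∈ q := by
            refine Ideal.mem_colon_span_singleton.mpr ?_
            have : (∑ c ∈ T, f c * X c) * a = s * x - (∑ c ∈ T, f c * P c) := by
              rw [key]; ring
            rw [this]
            exact Submodule.sub_mem _ (Ideal.mul_mem_left _ s hx) (Ideal.span_le.mpr
              (fun z hz => by rcases hz with ⟨c, hc, rfl⟩; exact (hPX c (hTF c hc)).1)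
              hsumP)
          have hXK : t * (∑ c ∈ T, f c * X c) ∈ K := by
            have := htK _ hsumXq
            rwa [smul_eq_mul] at this
          have h₁ : t * (∑ c ∈ T, f c * P c) ∈ Ideal.span (P '' ↑T) :=
            Ideal.mul_mem_left _ t hsumP
          have h₂ : a * (t * (∑ c ∈ T, f c * X c)) ∈ Ideal.span {a} * K :=
            Ideal.mul_mem_mul (Ideal.mem_span_singleton_self a) hXK
          have heq : (s * t) • x = t * (∑ c ∈ T, f c * P c) +
              a * (t * (∑ c ∈ T, f c * X c)) := by
            rw [smul_eq_mul]
            linear_combination t * key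
          rw [heq]
          exact Submodule.add_mem_sup h₁ h₂
    by_cases hmeet : ∀ s ∈ S, s ∉ p
    · exact hpnot (H p hpP hmeet)
    · push_neg at hmeet
      obtain ⟨s, hsS, hsp⟩ := hmeet
      refine hpnot ⟨Ideal.span {s}, ⟨{s}, by simp⟩, ?_, s, hsS, fun x hx => ?_⟩
      · rwa [Ideal.span_le, Set.singleton_subset_iff]
      · rw [smul_eq_mul]
        exact Ideal.mem_span_singleton'.mpr ⟨x, mul_comm x s⟩
end

section
/- Let A be a commutative ring, S ⊆ A multiplicatively closed, and M an S-finite A-module. Then M is S-noetherian if and only if for every prime ideal p of A with p ∩ S = ∅ the submodule M·p is S-finite. -/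
section aux
variable {A : Type*} [CommRing A] (S : Submonoid A) {M : Type*} [AddCommGroup M] [Module A M]

lemma key_contradiction (hM : SFin S (⊤ : Submodule A M))
    (H : ∀ p : Ideal A, p.IsPrime → (∀ s ∈ S, s ∉ p) → SFin S (p • (⊤ : Submodule A M)))
    (N : Submodule A M) (hmax : ∀ N' : Submodule A M, N < N' → SFin S N')
    (hN : ¬ SFin S N) : False := by
  classical
  obtain ⟨F₀, hF₀fg, -, t, htS, ht⟩ := hM
  -- the colon ideal
  set p : Ideal A := N.colon ⊤ with hp
  have hmemp : ∀ a : A, a ∈ p ↔ ∀ m : M, a • m ∈ N := by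
    intro a
    rw [hp, Submodule.mem_colon]
    exact ⟨fun h m => h m trivial, fun h m _ => h m⟩
  -- N ≠ ⊤
  have hNne : N ≠ ⊤ := by
    rintro rfl
    exact hN ⟨F₀, hF₀fg, le_top, t, htS, fun x _ => ht x trivial⟩
  -- p is disjoint from S
  have hpS : ∀ s ∈ S, s ∉ p := by
    intro s hsS hsp
    apply hN
    refine ⟨F₀.map (LinearMap.lsmul A M s), hF₀fg.map _, ?_, s * t, mul_mem hsS htS, ?_⟩
    · rintro _ ⟨y, -, rfl⟩
      exact (hmemp s).mp hsp y
    · intro x hx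
      rw [mul_smul]
      exact ⟨t • x, ht _ trivial, rfl⟩
  -- p is proper
  have hpne : p ≠ ⊤ := by
    intro h
    apply hNne
    rw [eq_top_iff]
    intro m _
    simpa using (hmemp 1).mp (h ▸ Submodule.mem_top) m
  -- p is prime
  have hprime : p.IsPrime := by
    refine ⟨hpne, ?_⟩
    intro a b hab
    by_contra hcon
    push_neg at hcon
    obtain ⟨ha, hb⟩ := hcon
    -- N' = (N : b)
    set N' : Submodule A M := N.comap (LinearMap.lsmul A M b) with hN'
    have hNN' : N ≤ N' := fun x hx => N.smul_mem b hx
    have hlt : N < N' := by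
      obtain ⟨m, hm⟩ : ∃ m : M, ¬ a • m ∈ N := by
        by_contra h; push_neg at h; exact ha ((hmemp a).mpr h)
      refine lt_of_le_of_ne hNN' fun h => hm ?_
      have : a • m ∈ N' := by
        simp only [hN', Submodule.mem_comap, LinearMap.lsmul_apply]
        rw [smul_smul]
        exact (hmemp (b * a)).mp (mul_comm a b ▸ hab) m
      rw [← h] at this; exact this
    obtain ⟨G, hGfg, hGle, s₂, hs₂S, hs₂⟩ := hmax N' hlt
    -- L = N ⊔ b⊤
    have hltL : N < N ⊔ (⊤ : Submodule A M).map (LinearMap.lsmul A M b) := by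
      obtain ⟨m, hm⟩ : ∃ m : M, ¬ b • m ∈ N := by
        by_contra h; push_neg at h; exact hb ((hmemp b).mpr h)
      refine lt_of_le_of_ne le_sup_left fun h => hm ?_
      have : b • m ∈ N ⊔ (⊤ : Submodule A M).map (LinearMap.lsmul A M b) :=
        Submodule.mem_sup_right ⟨m, trivial, rfl⟩
      rw [← h] at this; exact this
    obtain ⟨F, hFfg, hFle, s₁, hs₁S, hs₁⟩ := hmax _ hltL
    obtain ⟨T, hT⟩ := hFfg
    -- decompose generators
    have hdec : ∀ f ∈ (T : Set M), ∃ n ∈ N, ∃ z ∈ (⊤ : Submodule A M).map (LinearMap.lsmul A M b),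
        n + z = f := fun f hf => Submodule.mem_sup.mp (hFle (hT ▸ Submodule.subset_span hf))
    choose n hn z hz hnz using hdec
    set N₁ : Submodule A M := Submodule.span A (Set.range fun f : T => n f f.2) with hN₁
    have hN₁fg : N₁.FG := Submodule.fg_span (Set.finite_range _)
    have hN₁N : N₁ ≤ N := Submodule.span_le.mpr (by rintro _ ⟨f, rfl⟩; exact hn f f.2)
    have hFle' : F ≤ N₁ ⊔ (⊤ : Submodule A M).map (LinearMap.lsmul A M b) := by
      rw [← hT, Submodule.span_le]
      intro f hf
      rw [← hnz f hf]
      exact Submodule.add_mem _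
        (Submodule.mem_sup_left (Submodule.subset_span ⟨⟨f, hf⟩, rfl⟩))
        (Submodule.mem_sup_right (hz f hf))
    apply hN
    refine ⟨N₁ ⊔ G.map (LinearMap.lsmul A M b), hN₁fg.sup (hGfg.map _), ?_,
      s₂ * s₁, mul_mem hs₂S hs₁S, ?_⟩
    · refine sup_le hN₁N ?_
      rintro _ ⟨g, hg, rfl⟩
      exact hGle hg
    · intro x hx
      obtain ⟨n', hn', z', hz', hsum⟩ := Submodule.mem_sup.mp (hFle' (hs₁ x (Submodule.mem_sup_left hx)))
      obtain ⟨y, -, rfl⟩ := hz'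
      have hyN' : y ∈ N' := by
        have : (LinearMap.lsmul A M b) y = s₁ • x - n' := by rw [← hsum]; abel
        simp only [hN', Submodule.mem_comap, LinearMap.lsmul_apply] at this ⊢
        rw [this]
        exact N.sub_mem (N.smul_mem s₁ hx) (hN₁N hn')
      rw [mul_smul, ← hsum, smul_add]
      refine Submodule.add_mem _ (Submodule.mem_sup_left ((N₁).smul_mem s₂ hn')) ?_
      refine Submodule.mem_sup_right ⟨s₂ • y, hs₂ y hyN', ?_⟩
      simp only [LinearMap.lsmul_apply]
      rw [smul_comm]
  -- existence of a "non-saturated" element m₀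
  obtain ⟨m₀, hm₀⟩ : ∃ m₀ : M, ∀ e : A, e • m₀ ∈ N → e ∈ p := by
    by_contra h
    push_neg at h
    choose e he hep using h
    obtain ⟨T₀, hT₀⟩ := hF₀fg
    set d : A := ∏ f ∈ T₀, e f with hd
    have hdp : d ∉ p := by
      intro hdmem
      obtain ⟨f, -, hf⟩ := (Ideal.IsPrime.prod_mem_iff (hp := hprime)).mp hdmem
      exact hep f hf
    have hdT : ∀ f ∈ T₀, d • f ∈ N := by
      intro f hf
      rw [hd, ← Finset.mul_prod_erase T₀ e hf, mul_comm, mul_smul]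
      exact N.smul_mem _ (he f)
    have hdF₀ : ∀ x ∈ F₀, d • x ∈ N := by
      intro x hx
      have : F₀ ≤ N.comap (LinearMap.lsmul A M d) := by
        rw [← hT₀, Submodule.span_le]
        intro f hf
        exact hdT f hf
      exact this hx
    have : d * t ∈ p := (hmemp _).mpr fun m => by
      rw [mul_smul]; exact hdF₀ _ (ht m trivial)
    rcases hprime.mem_or_mem this with h1 | h1
    · exact hdp h1
    · exact hpS t htS h1
  -- L = N ⊔ span {m₀}
  have hm₀N : m₀ ∉ N := fun h => hpne (Ideal.eq_top_of_isUnit_mem _ (hm₀ 1 (by simpa using h)) isUnit_one)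
  have hltL : N < N ⊔ Submodule.span A {m₀} := by
    refine lt_of_le_of_ne le_sup_left fun h => hm₀N ?_
    have : m₀ ∈ N ⊔ Submodule.span A {m₀} :=
      Submodule.mem_sup_right (Submodule.subset_span rfl)
    rw [← h] at this; exact this
  obtain ⟨F, hFfg, hFle, s₁, hs₁S, hs₁⟩ := hmax _ hltL
  obtain ⟨G, hGfg, hGle, s₂, hs₂S, hs₂⟩ := H p hprime hpS
  have hPN : p • (⊤ : Submodule A M) ≤ N :=
    Submodule.smul_le.mpr fun a ha m _ => (hmemp a).mp ha m
  obtain ⟨T, hT⟩ := hFfg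
  have hdec : ∀ f ∈ (T : Set M), ∃ n ∈ N, ∃ z ∈ Submodule.span A {m₀},
      n + z = f := fun f hf => Submodule.mem_sup.mp (hFle (hT ▸ Submodule.subset_span hf))
  choose n hn z hz hnz using hdec
  set N₁ : Submodule A M := Submodule.span A (Set.range fun f : T => n f f.2) with hN₁
  have hN₁fg : N₁.FG := Submodule.fg_span (Set.finite_range _)
  have hN₁N : N₁ ≤ N := Submodule.span_le.mpr (by rintro _ ⟨f, rfl⟩; exact hn f f.2)
  have hFle' : F ≤ N₁ ⊔ Submodule.span A {m₀} := by
    rw [← hT, Submodule.span_le]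
    intro f hf
    rw [← hnz f hf]
    exact Submodule.add_mem _
      (Submodule.mem_sup_left (Submodule.subset_span ⟨⟨f, hf⟩, rfl⟩))
      (Submodule.mem_sup_right (hz f hf))
  apply hN
  refine ⟨N₁ ⊔ G, hN₁fg.sup hGfg, sup_le hN₁N (hGle.trans hPN), s₂ * s₁,
    mul_mem hs₂S hs₁S, ?_⟩
  intro x hx
  obtain ⟨n', hn', z', hz', hsum⟩ := Submodule.mem_sup.mp (hFle' (hs₁ x (Submodule.mem_sup_left hx)))
  obtain ⟨c, rfl⟩ := Submodule.mem_span_singleton.mp hz'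
  have hcz : c • m₀ ∈ N := by
    have : c • m₀ = s₁ • x - n' := by rw [← hsum]; abel
    rw [this]
    exact N.sub_mem (N.smul_mem s₁ hx) (hN₁N hn')
  have hcp : c ∈ p := hm₀ c hcz
  have hzP : c • m₀ ∈ p • (⊤ : Submodule A M) := Submodule.smul_mem_smul hcp trivial
  rw [mul_smul, ← hsum, smul_add]
  exact Submodule.add_mem _ (Submodule.mem_sup_left (N₁.smul_mem s₂ hn'))
    (Submodule.mem_sup_right (hs₂ _ hzP))

end aux

theorem stmt9 {A : Type*} [CommRing A] (S : Submonoid A) {M : Type*} [AddCommGroup M]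
    [Module A M] (hM : SFin S (⊤ : Submodule A M)) :
    SNoeth S M ↔
      ∀ p : Ideal A, p.IsPrime → (∀ s ∈ S, s ∉ p) →
        SFin S (p • (⊤ : Submodule A M)) := by
  constructor
  · intro h p _ _
    exact h _
  · intro H
    by_contra hns
    simp only [SNoeth, not_forall] at hns
    obtain ⟨N₀, hN₀⟩ := hns
    -- Zorn's lemma on the set of non-S-finite submodules
    have hchaincond : ∀ c ⊆ {N : Submodule A M | ¬ SFin S N}, IsChain (· ≤ ·) c →
        ∀ y ∈ c, ∃ ub ∈ {N : Submodule A M | ¬ SFin S N}, ∀ z ∈ c, z ≤ ub := by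
      intro c hc hchain y hy
      refine ⟨sSup c, ?_, fun z hz => le_sSup hz⟩
      intro hsfin
      obtain ⟨F, hFfg, hFle, s, hsS, hs⟩ := hsfin
      obtain ⟨z, hzc, hFz⟩ :=
        (CompleteLattice.isCompactElement_iff_le_of_directed_sSup_le (α := Submodule A M) F).mp
          ((Submodule.fg_iff_compact F).mp hFfg) c ⟨y, hy⟩ hchain.directedOn hFle
      exact hc hzc ⟨F, hFfg, hFz, s, hsS, fun x hx => hs x (le_sSup hzc hx)⟩
    obtain ⟨N, -, hNmem, hNmax⟩ :=
      zorn_le_nonempty₀ {N : Submodule A M | ¬ SFin S N} hchaincond N₀ hN₀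
    refine key_contradiction S hM H N (fun N' hlt => ?_) hNmem
    by_contra hN'
    exact hlt.not_ge (hNmax hN' hlt.le)
end

section
/- Let A be a commutative ring, S ⊆ A multiplicatively closed, and M an A-module. Then M is S-noetherian if and only if every nonempty family of submodules of M has an S-maximal element, i.e., an element N of the family for which there exists s ∈ S such that for every H in the family with N ⊆ H one has H·s ⊆ N. -/
/-- The `S`-saturation of a submodule: elements sent into `N` by some `s ∈ S`. -/
def SSat {A : Type*} [CommRing A] (S : Submonoid A) {M : Type*} [AddCommGroup M]
    [Module A M] (N : Submodule A M) : Submodule A M where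
  carrier := {x | ∃ s ∈ S, s • x ∈ N}
  add_mem' := by
    rintro a b ⟨s, hs, hsa⟩ ⟨t, ht, htb⟩
    refine ⟨s * t, S.mul_mem hs ht, ?_⟩
    rw [smul_add]
    refine N.add_mem ?_ ?_
    · rw [mul_comm, mul_smul]; exact N.smul_mem t hsa
    · rw [mul_smul]; exact N.smul_mem s htb
  zero_mem' := ⟨1, S.one_mem, by simp⟩
  smul_mem' := by
    rintro c x ⟨s, hs, hsx⟩
    exact ⟨s, hs, by rw [smul_comm]; exact N.smul_mem c hsx⟩

theorem exists_sweak_max {A : Type*} [CommRing A] (S : Submonoid A) {M : Type*}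
    [AddCommGroup M] [Module A M] (hSN : SNoeth S M) (F : Set (Submodule A M))
    (hne : F.Nonempty) :
    ∃ N ∈ F, ∀ H ∈ F, N ≤ H → H ≤ SSat S N := by
  by_contra hbad
  push_neg at hbad
  -- hbad : ∀ N ∈ F, ∃ H ∈ F, N ≤ H ∧ ¬ H ≤ SSat S N
  obtain ⟨N₀, hN₀⟩ := hne
  choose g hgF hgle hgns using hbad
  -- build an increasing chain
  let step : {N : Submodule A M // N ∈ F} → {N : Submodule A M // N ∈ F} :=
    fun N => ⟨g N.1 N.2, hgF N.1 N.2⟩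
  let seq : ℕ → {N : Submodule A M // N ∈ F} := fun n => step^[n] ⟨N₀, hN₀⟩
  have hseq_succ : ∀ n, seq (n + 1) = step (seq n) := fun n =>
    Function.iterate_succ_apply' step n ⟨N₀, hN₀⟩
  have hmono : Monotone (fun n => (seq n).1) := by
    apply monotone_nat_of_le_succ
    intro n
    rw [hseq_succ n]
    exact hgle (seq n).1 (seq n).2
  set chain : ℕ →o Submodule A M := ⟨fun n => (seq n).1, hmono⟩ with hchain
  obtain ⟨F₀, hFG, hle, t, htS, ht⟩ := hSN (⨆ n, chain n)
  obtain ⟨Y, hY⟩ := hFG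
  -- find an index j with F₀ ≤ chain j
  have hj : ∃ j, F₀ ≤ chain j := by
    have hmem : ∀ z ∈ (Y : Set M), ∃ k, z ∈ chain k := by
      intro z hz
      have : z ∈ ⨆ n, chain n := hle (hY ▸ Submodule.subset_span hz)
      exact (Submodule.mem_iSup_of_chain chain z).mp this
    choose k hk using hmem
    classical
    refine ⟨Y.attach.sup (fun z => k z.1 z.2), ?_⟩
    rw [← hY, Submodule.span_le]
    intro z hz
    exact hmono (Finset.le_sup (Finset.mem_attach Y ⟨z, hz⟩)) (hk z hz)
  obtain ⟨j, hj⟩ := hj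
  -- the witness element at stage j
  have hns := hgns (seq j).1 (seq j).2
  apply hns
  intro x hx
  have hxU : x ∈ ⨆ n, chain n := by
    refine Submodule.mem_iSup_of_mem (j + 1) ?_
    have : (chain (j + 1) : Submodule A M) = g (seq j).1 (seq j).2 := by
      show (seq (j + 1)).1 = _
      rw [hseq_succ j]
    rw [this]
    exact hx
  exact ⟨t, htS, hj (ht x hxU)⟩

theorem stmt11 {A : Type*} [CommRing A] (S : Submonoid A) {M : Type*} [AddCommGroup M]
    [Module A M] :
    SNoeth S M ↔
      ∀ F : Set (Submodule A M), F.Nonempty →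
        ∃ N ∈ F, ∃ s ∈ S, ∀ H ∈ F, N ≤ H → ∀ x ∈ H, s • x ∈ N := by
  constructor
  · intro hSN F hne
    obtain ⟨N, hNF, hNmax⟩ := exists_sweak_max S hSN F hne
    -- apply S-noetherianity to the saturation of N
    obtain ⟨F₀, hFG, hle, u, huS, hu⟩ := hSN (SSat S N)
    obtain ⟨Y, hY⟩ := hFG
    classical
    -- for each generator pick a multiplier into N
    have hgen : ∀ y ∈ Y, (y : M) ∈ SSat S N := by
      intro y hy
      exact hle (hY ▸ Submodule.subset_span hy)
    choose! sy hsyS hsy using fun y hy => hgen y hy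
    set c : A := Y.prod sy with hc
    have hcS : c ∈ S := S.prod_mem fun y hy => hsyS y hy
    have hcspan : ∀ z ∈ F₀, c • z ∈ N := by
      intro z hz
      rw [← hY] at hz
      induction hz using Submodule.span_induction with
      | mem z hz =>
          have : c = (Y.erase z).prod sy * sy z := by
            rw [hc, ← Finset.prod_erase_mul Y sy hz]
          rw [this, mul_smul]
          exact N.smul_mem _ (hsy z hz)
      | zero => simp
      | add a b _ _ ha hb => rw [smul_add]; exact N.add_mem ha hb
      | smul a z _ hz => rw [smul_comm]; exact N.smul_mem a hz
    refine ⟨N, hNF, c * u, S.mul_mem hcS huS, ?_⟩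
    intro H hHF hNH x hx
    have hxsat : x ∈ SSat S N := hNmax H hHF hNH hx
    have := hcspan (u • x) (hu x hxsat)
    rw [mul_smul]
    exact this
  · intro h N
    obtain ⟨F₀, ⟨hFG, hFN⟩, s, hsS, hmax⟩ :=
      h {F | F.FG ∧ F ≤ N} ⟨⊥, Submodule.fg_bot, bot_le⟩
    refine ⟨F₀, hFG, hFN, s, hsS, ?_⟩
    intro x hx
    have hH : (F₀ ⊔ Submodule.span A {x}) ∈ {F : Submodule A M | F.FG ∧ F ≤ N} := by
      refine ⟨hFG.sup (Submodule.fg_span_singleton x), sup_le hFN ?_⟩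
      rw [Submodule.span_singleton_le_iff_mem]
      exact hx
    exact hmax _ hH le_sup_left x
      (Submodule.mem_sup_right (Submodule.mem_span_singleton_self x))
end

section
/- Let A be a commutative ring, S ⊆ A multiplicatively closed, M an A-module, and T ⊆ M a submodule with T·s₀ = 0 for some s₀ ∈ S. Then M is S-noetherian if and only if M/T is S-noetherian. -/
theorem stmt12 {A : Type*} [CommRing A] (S : Submonoid A) {M : Type*} [AddCommGroup M]
    [Module A M] (T : Submodule A M) (hT : ∃ s₀ ∈ S, ∀ x ∈ T, s₀ • x = 0) :
    SNoeth S M ↔ SNoeth S (M ⧸ T) := by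
  obtain ⟨s₀, hs₀S, hs₀⟩ := hT
  constructor
  · intro hM N
    obtain ⟨F, hFfg, hFN, s, hsS, hF⟩ := hM (N.comap T.mkQ)
    refine ⟨F.map T.mkQ, hFfg.map _, Submodule.map_le_iff_le_comap.mpr hFN, s, hsS, ?_⟩
    intro x hx
    obtain ⟨y, rfl⟩ := T.mkQ_surjective x
    have hy : y ∈ N.comap T.mkQ := hx
    have := hF y hy
    have : T.mkQ (s • y) ∈ F.map T.mkQ := Submodule.mem_map_of_mem this
    simpa using this
  · intro hQ N
    obtain ⟨Fb, hfg, hle, s, hsS, hF⟩ := hQ (N.map T.mkQ)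
    obtain ⟨G, hG⟩ := hfg
    have hlift : ∀ g : G, ∃ y, y ∈ N ∧ T.mkQ y = (g : M ⧸ T) := by
      intro g
      have hgF : (g : M ⧸ T) ∈ Fb := hG ▸ Submodule.subset_span g.2
      obtain ⟨y, hyN, hy⟩ := hle hgF
      exact ⟨y, hyN, hy⟩
    choose f hfN hfmk using hlift
    refine ⟨Submodule.span A (Set.range f), Submodule.fg_span (Set.finite_range f),
      Submodule.span_le.mpr (by rintro _ ⟨g, rfl⟩; exact hfN g),
      s₀ * s, S.mul_mem hs₀S hsS, ?_⟩
    intro x hx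
    have hmem : s • (T.mkQ x) ∈ Fb := hF _ (Submodule.mem_map_of_mem hx)
    have hmap : Fb ≤ (Submodule.span A (Set.range f)).map T.mkQ := by
      rw [← hG, Submodule.span_le]
      intro g hg
      exact ⟨f ⟨g, hg⟩, Submodule.subset_span ⟨⟨g, hg⟩, rfl⟩, hfmk ⟨g, hg⟩⟩
    obtain ⟨y, hyF, hy⟩ := hmap hmem
    have hsub : s • x - y ∈ T := by
      rw [← Submodule.Quotient.eq]
      have : T.mkQ (s • x) = s • T.mkQ x := by simp
      rw [← Submodule.Quotient.mk''_eq_mk, ← Submodule.Quotient.mk''_eq_mk]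
      show T.mkQ (s • x) = T.mkQ y
      rw [this, hy]
    have h0 : s₀ • (s • x - y) = 0 := hs₀ _ hsub
    have : (s₀ * s) • x = s₀ • y := by
      have := sub_eq_zero.mp (by simpa [smul_sub] using h0)
      simpa [mul_smul] using this
    rw [this]
    exact Submodule.smul_mem _ _ hyF
end

section
/- (Relative Eakin–Nagata) Let A ⊆ B be an extension of commutative rings and S ⊆ A a multiplicatively closed subset. If B is S-finite as an A-module and B is S-noetherian as a B-module (for the image of S in B), then A is S-noetherian. -/
namespace EN13

variable {A B : Type*} [CommRing A] [CommRing B] [Algebra A B]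

/-- `N` is `S`-finite relative to `J`: there is a finitely generated `F ≤ N` and
`s ∈ S` with `s • N ⊆ F + J`. -/
def Fin2 (S : Submonoid A) (N J : Submodule A B) : Prop :=
  ∃ F : Submodule A B, F.FG ∧ F ≤ N ∧ ∃ s ∈ S, ∀ x ∈ N, s • x ∈ F ⊔ J

/-- Every `N ≥ J` is `S`-finite relative to `J`. -/
def Noe (S : Submonoid A) (J : Submodule A B) : Prop :=
  ∀ N : Submodule A B, J ≤ N → Fin2 S N J

lemma split_fg {M : Type*} [AddCommGroup M] [Module A M] {P N K : Submodule A M}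
    (hP : P.FG) (h : P ≤ N ⊔ K) :
    ∃ F : Submodule A M, F.FG ∧ F ≤ N ∧ P ≤ F ⊔ K := by
  classical
  obtain ⟨T, hT⟩ := hP
  choose y hy z hz hyz using fun g : T =>
    Submodule.mem_sup.1 (h (hT ▸ Submodule.subset_span g.2))
  refine ⟨Submodule.span A (Set.range y), Submodule.fg_span (Set.finite_range y),
    Submodule.span_le.2 ?_, ?_⟩
  · rintro _ ⟨g, rfl⟩; exact hy g
  · rw [← hT, Submodule.span_le]
    intro g hg
    have : y ⟨g, hg⟩ + z ⟨g, hg⟩ = g := hyz ⟨g, hg⟩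
    rw [← this]
    exact Submodule.add_mem _ (Submodule.mem_sup_left (Submodule.subset_span ⟨⟨g, hg⟩, rfl⟩))
      (Submodule.mem_sup_right (hz ⟨g, hg⟩))

lemma absorb {s₀ : A} (M₀ : Submodule A B) (hM₀ : M₀.FG)
    (hs₀ : ∀ x : B, s₀ • x ∈ M₀) (G : Ideal B) (hG : G.FG) :
    ∃ F : Submodule A B, F.FG ∧ F ≤ G.restrictScalars A ∧ ∀ x ∈ G, s₀ • x ∈ F := by
  obtain ⟨T, hT⟩ := hG
  refine ⟨M₀ * Submodule.span A (T : Set B),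
    hM₀.mul (Submodule.fg_span T.finite_toSet), ?_, ?_⟩
  · rw [Submodule.mul_le]
    intro m _ nn hn
    have hTG : (T : Set B) ⊆ G := by rw [← hT]; exact Submodule.subset_span
    have hn' : nn ∈ G := by
      have : Submodule.span A (T : Set B) ≤ G.restrictScalars A :=
        Submodule.span_le.2 hTG
      exact this hn
    exact Ideal.mul_mem_left G m hn'
  · intro x hx
    rw [← hT] at hx
    have key : ∀ x ∈ Submodule.span B (T : Set B), ∀ β : B,
        s₀ • (β * x) ∈ M₀ * Submodule.span A (T : Set B) := by
      intro x hx
      induction hx using Submodule.span_induction with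
      | mem g hg =>
        intro β
        rw [← smul_mul_assoc]
        exact Submodule.mul_mem_mul (hs₀ β) (Submodule.subset_span hg)
      | zero => intro β; simp
      | add x y hx hy ihx ihy =>
        intro β; rw [mul_add, smul_add]; exact add_mem (ihx β) (ihy β)
      | smul b x hx ih =>
        intro β
        have : β * (b • x) = (β * b) * x := by
          rw [smul_eq_mul]; ring
        rw [this]; exact ih (β * b)
    have := key x hx 1
    rwa [one_mul] at this

lemma chain_finset {M : Type*} [AddCommGroup M] [Module A M]
    {c : Set (Submodule A M)} (hne : c.Nonempty) (hc : IsChain (· ≤ ·) c)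
    (T : Finset M) (hT : ∀ g ∈ T, g ∈ sSup c) : ∃ J ∈ c, ∀ g ∈ T, g ∈ J := by
  classical
  induction T using Finset.induction with
  | empty => exact ⟨hne.choose, hne.choose_spec, by simp⟩
  | @insert a T hnotmem ih =>
    obtain ⟨J₂, hJ₂c, hJ₂⟩ := ih (fun g hg => hT g (Finset.mem_insert_of_mem hg))
    obtain ⟨J₃, hJ₃c, ha⟩ := (Submodule.mem_sSup_of_directed hne hc.directedOn).1
      (hT _ (Finset.mem_insert_self _ _))
    rcases hc.total hJ₂c hJ₃c with h | h
    · exact ⟨J₃, hJ₃c, fun g hg => by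
        rcases Finset.mem_insert.1 hg with rfl | hg
        exacts [ha, h (hJ₂ g hg)]⟩
    · exact ⟨J₂, hJ₂c, fun g hg => by
        rcases Finset.mem_insert.1 hg with rfl | hg
        exacts [h ha, hJ₂ g hg]⟩

lemma transfer (S : Submonoid A) {s₀ : A} (hs₀S : s₀ ∈ S) (M₀ : Submodule A B)
    (hM₀ : M₀.FG) (hs₀ : ∀ x : B, s₀ • x ∈ M₀)
    {J J' : Ideal B} (hNoe : Noe S (J'.restrictScalars A))
    {G : Ideal B} (hG : G.FG) (hGJ : G ≤ J)
    {t : A} (htS : t ∈ S) (ht : ∀ x ∈ J', (algebraMap A B t) * x ∈ G) :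
    Noe S (J.restrictScalars A) := by
  intro N hN
  obtain ⟨F₀, hF₀fg, hF₀le, s₁, hs₁S, hs₁⟩ :=
    hNoe (N ⊔ J'.restrictScalars A) le_sup_right
  obtain ⟨F, hFfg, hFle, hF₀'⟩ := split_fg hF₀fg hF₀le
  obtain ⟨FG, hFGfg, hFGle, hFG⟩ := absorb M₀ hM₀ hs₀ G hG
  have hFGN : FG ≤ N := le_trans hFGle (le_trans (fun x hx => hGJ hx) hN)
  refine ⟨F ⊔ FG, hFfg.sup hFGfg, sup_le hFle hFGN, s₀ * (t * s₁),
    S.mul_mem hs₀S (S.mul_mem htS hs₁S), ?_⟩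
  intro x hx
  have h1 : s₁ • x ∈ F ⊔ J'.restrictScalars A := by
    have := hs₁ x (Submodule.mem_sup_left hx)
    have h2 : F₀ ⊔ J'.restrictScalars A ≤ F ⊔ J'.restrictScalars A :=
      sup_le (le_trans hF₀' (by exact sup_le le_sup_left le_sup_right)) le_sup_right
    exact h2 this
  obtain ⟨f, hf, z, hz, hfz⟩ := Submodule.mem_sup.1 h1
  have hz' : algebraMap A B t * z ∈ G := ht z hz
  have key : (s₀ * (t * s₁)) • x = s₀ • (t • f) + s₀ • (t • z) := by
    rw [mul_smul, mul_smul, ← hfz, smul_add, smul_add]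
  rw [key]
  have m1 : s₀ • (t • f) ∈ F := F.smul_mem _ (F.smul_mem _ hf)
  have m2 : s₀ • (t • z) ∈ FG := by
    have : t • z = algebraMap A B t * z := Algebra.smul_def t z
    rw [this]
    exact hFG _ hz'
  exact Submodule.mem_sup_left (Submodule.add_mem _ (Submodule.mem_sup_left m1)
    (Submodule.mem_sup_right m2))

lemma idealSfin (S : Submonoid A)
    (hB : ∀ N : Submodule B B, ∃ F : Submodule B B, F.FG ∧ F ≤ N ∧
      ∃ s ∈ S.map (algebraMap A B), ∀ x ∈ N, s • x ∈ F)
    (J : Ideal B) : ∃ G : Ideal B, G.FG ∧ G ≤ J ∧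
      ∃ t ∈ S, ∀ x ∈ J, (algebraMap A B t) * x ∈ G := by
  obtain ⟨G, hGfg, hGle, s, hsS, hs⟩ := hB J
  obtain ⟨t, htS, rfl⟩ := hsS
  exact ⟨G, hGfg, hGle, t, htS, fun x hx => by
    have := hs x hx; rwa [smul_eq_mul] at this⟩

lemma zorn1 (S : Submonoid A) {s₀ : A} (hs₀S : s₀ ∈ S) (M₀ : Submodule A B)
    (hM₀ : M₀.FG) (hs₀ : ∀ x : B, s₀ • x ∈ M₀)
    (hB : ∀ N : Submodule B B, ∃ F : Submodule B B, F.FG ∧ F ≤ N ∧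
      ∃ s ∈ S.map (algebraMap A B), ∀ x ∈ N, s • x ∈ F)
    {J₁ : Ideal B} (hJ₁ : ¬ Noe S (J₁.restrictScalars A)) :
    ∃ J₀ : Ideal B, ¬ Noe S (J₀.restrictScalars A) ∧
      ∀ J : Ideal B, J₀ < J → Noe S (J.restrictScalars A) := by
  have hchain : ∀ c ⊆ {J : Ideal B | ¬ Noe S (J.restrictScalars A)},
      IsChain (· ≤ ·) c → ∀ y ∈ c, ∃ ub ∈ {J : Ideal B | ¬ Noe S (J.restrictScalars A)},
      ∀ z ∈ c, z ≤ ub := by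
    intro c hcsub hc y hy
    refine ⟨sSup c, ?_, fun z hz => le_sSup hz⟩
    intro hNoe
    obtain ⟨G, hGfg, hGle, t, htS, ht⟩ := idealSfin S hB (sSup c)
    obtain ⟨T, hT⟩ := hGfg
    obtain ⟨J₂, hJ₂c, hJ₂⟩ := chain_finset ⟨y, hy⟩ hc T
      (fun g hg => hGle (hT ▸ Submodule.subset_span hg))
    have hGJ₂ : G ≤ J₂ := by rw [← hT]; exact Submodule.span_le.2 hJ₂
    exact hcsub hJ₂c (transfer S hs₀S M₀ hM₀ hs₀ hNoe ⟨T, hT⟩ hGJ₂ htS ht)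
  obtain ⟨J₀, -, hmax⟩ := zorn_le_nonempty₀
    {J : Ideal B | ¬ Noe S (J.restrictScalars A)} hchain J₁ hJ₁
  refine ⟨J₀, hmax.1, fun J hJ => ?_⟩
  by_contra hbad
  exact hJ.not_ge (hmax.2 hbad hJ.le)

lemma killer (S : Submonoid A)
    (hB : ∀ N : Submodule B B, ∃ F : Submodule B B, F.FG ∧ F ≤ N ∧
      ∃ s ∈ S.map (algebraMap A B), ∀ x ∈ N, s • x ∈ F)
    (J₀ : Ideal B) :
    ∃ u ∈ S, ∀ a : A, (∃ t ∈ S, algebraMap A B (t * a) ∈ J₀) →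
      algebraMap A B (u * a) ∈ J₀ := by
  classical
  set aS : Set A := {a : A | ∃ t ∈ S, algebraMap A B (t * a) ∈ J₀} with haS
  set Jst : Ideal B := Ideal.span ((J₀ : Set B) ∪ (algebraMap A B) '' aS) with hJst
  have hQ : ∀ x ∈ Jst, ∃ u ∈ S, algebraMap A B u * x ∈ J₀ := by
    intro x hx
    induction hx using Submodule.span_induction with
    | mem g hg =>
      rcases hg with hg | ⟨a, ha, rfl⟩
      · exact ⟨1, S.one_mem, by rwa [map_one, one_mul]⟩
      · obtain ⟨t, htS, ht⟩ := ha
        exact ⟨t, htS, by rwa [← map_mul]⟩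
    | zero => exact ⟨1, S.one_mem, by simp⟩
    | add x y hx hy ihx ihy =>
      obtain ⟨u₁, hu₁S, hu₁⟩ := ihx
      obtain ⟨u₂, hu₂S, hu₂⟩ := ihy
      refine ⟨u₁ * u₂, S.mul_mem hu₁S hu₂S, ?_⟩
      have : algebraMap A B (u₁ * u₂) * (x + y) =
          algebraMap A B u₂ * (algebraMap A B u₁ * x) +
          algebraMap A B u₁ * (algebraMap A B u₂ * y) := by
        rw [map_mul]; ring
      rw [this]
      exact J₀.add_mem (J₀.mul_mem_left _ hu₁) (J₀.mul_mem_left _ hu₂)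
    | smul b x hx ih =>
      obtain ⟨u, huS, hu⟩ := ih
      refine ⟨u, huS, ?_⟩
      have : algebraMap A B u * (b • x) = b * (algebraMap A B u * x) := by
        rw [smul_eq_mul]; ring
      rw [this]
      exact J₀.mul_mem_left _ hu
  obtain ⟨G, hGfg, hGle, t, htS, ht⟩ := idealSfin S hB Jst
  obtain ⟨T, hT⟩ := hGfg
  have hchoose : ∀ g : B, ∃ u : A, u ∈ S ∧ (g ∈ T → algebraMap A B u * g ∈ J₀) := by
    intro g
    by_cases hg : g ∈ T
    · obtain ⟨u, huS, hu⟩ := hQ g (hGle (hT ▸ Submodule.subset_span hg))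
      exact ⟨u, huS, fun _ => hu⟩
    · exact ⟨1, S.one_mem, fun h => absurd h hg⟩
  choose uf hufS huf using hchoose
  set u₀ : A := ∏ g ∈ T, uf g with hu₀
  have hu₀S : u₀ ∈ S := Submonoid.prod_mem S (fun g _ => hufS g)
  have hkill : ∀ x ∈ G, algebraMap A B u₀ * x ∈ J₀ := by
    intro x hx
    rw [← hT] at hx
    induction hx using Submodule.span_induction with
    | mem g hg =>
      have h1 : algebraMap A B u₀ * g =
          algebraMap A B (∏ x ∈ T.erase g, uf x) * (algebraMap A B (uf g) * g) := by
        rw [← mul_assoc, ← map_mul, Finset.prod_erase_mul T uf hg]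
      rw [h1]
      exact J₀.mul_mem_left _ (huf g hg)
    | zero => simp
    | add x y hx hy ihx ihy =>
      rw [mul_add]; exact J₀.add_mem ihx ihy
    | smul b x hx ih =>
      have : algebraMap A B u₀ * (b • x) = b * (algebraMap A B u₀ * x) := by
        rw [smul_eq_mul]; ring
      rw [this]; exact J₀.mul_mem_left _ ih
  refine ⟨u₀ * t, S.mul_mem hu₀S htS, fun a ha => ?_⟩
  have h1 : algebraMap A B a ∈ Jst := Ideal.subset_span (Or.inr ⟨a, ha, rfl⟩)
  have h2 : algebraMap A B t * algebraMap A B a ∈ G := ht _ h1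
  have h3 := hkill _ h2
  rw [mul_assoc, map_mul, map_mul]
  exact h3

lemma zorn2 (S : Submonoid A) {s₀ : A} (hs₀S : s₀ ∈ S) {n : ℕ} (b : Fin n → B)
    {M₀ : Submodule A B} (hb : Submodule.span A (Set.range b) = M₀)
    (hs₀ : ∀ x : B, s₀ • x ∈ M₀) (J₀ : Ideal B) :
    ∃ N : Submodule A B, J₀.restrictScalars A ≤ N ∧
      (∀ a : A, (∃ t ∈ S, ∀ β : B, algebraMap A B (t * a) * β ∈ N) →
        (∃ t ∈ S, algebraMap A B (t * a) ∈ J₀)) ∧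
      (∀ N' : Submodule A B, N < N' →
        ∃ a : A, ¬ (∃ t ∈ S, algebraMap A B (t * a) ∈ J₀) ∧
          ∃ t ∈ S, ∀ β : B, algebraMap A B (t * a) * β ∈ N') := by
  classical
  set aS : Set A := {a : A | ∃ t ∈ S, algebraMap A B (t * a) ∈ J₀} with haS
  set Sig2 : Set (Submodule A B) := {N | J₀.restrictScalars A ≤ N ∧
    ∀ a : A, (∃ t ∈ S, ∀ β : B, algebraMap A B (t * a) * β ∈ N) → a ∈ aS} with hSig2
  have hJ0Sig : (J₀.restrictScalars A) ∈ Sig2 := by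
    refine ⟨le_refl _, fun a ⟨t, htS, ht⟩ => ⟨t, htS, ?_⟩⟩
    have := ht 1
    rwa [mul_one] at this
  have hchain : ∀ c ⊆ Sig2, IsChain (· ≤ ·) c → ∀ y ∈ c,
      ∃ ub ∈ Sig2, ∀ z ∈ c, z ≤ ub := by
    intro c hcsub hc y hy
    refine ⟨sSup c, ⟨le_trans (hcsub hy).1 (le_sSup hy), ?_⟩, fun z hz => le_sSup hz⟩
    rintro a ⟨t, htS, ht⟩
    obtain ⟨N₂, hN₂c, hN₂⟩ := chain_finset ⟨y, hy⟩ hc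
      (Finset.image (fun i => algebraMap A B (t * a) * b i) Finset.univ)
      (by
        intro g hg
        obtain ⟨i, -, rfl⟩ := Finset.mem_image.1 hg
        exact ht (b i))
    have hM₀mem : ∀ m ∈ M₀, algebraMap A B (t * a) * m ∈ N₂ := by
      intro m hm
      rw [← hb] at hm
      induction hm using Submodule.span_induction with
      | mem g hg =>
        obtain ⟨i, rfl⟩ := hg
        exact hN₂ _ (Finset.mem_image.2 ⟨i, Finset.mem_univ i, rfl⟩)
      | zero => simp
      | add x y hx hy ihx ihy => rw [mul_add]; exact N₂.add_mem ihx ihy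
      | smul r x hx ih => rw [mul_smul_comm]; exact N₂.smul_mem r ih
    have hall : ∀ β : B, algebraMap A B ((t * s₀) * a) * β ∈ N₂ := by
      intro β
      have e : algebraMap A B ((t * s₀) * a) * β =
          algebraMap A B (t * a) * (s₀ • β) := by
        rw [Algebra.smul_def, ← mul_assoc, ← map_mul]
        ring_nf
      rw [e]
      exact hM₀mem _ (hs₀ β)
    exact (hcsub hN₂c).2 a ⟨t * s₀, S.mul_mem htS hs₀S, hall⟩
  obtain ⟨N, -, hmax⟩ := zorn_le_nonempty₀ Sig2 hchain _ hJ0Sig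
  refine ⟨N, hmax.1.1, hmax.1.2, fun N' hlt => ?_⟩
  have hN'm : N' ∉ Sig2 := fun h => hlt.not_ge (hmax.2 h hlt.le)
  rw [hSig2] at hN'm
  simp only [Set.mem_setOf_eq, not_and, not_forall] at hN'm
  have hJle : J₀.restrictScalars A ≤ N' := le_trans hmax.1.1 hlt.le
  obtain ⟨a, ha1, ha2⟩ := hN'm hJle
  exact ⟨a, ha2, ha1⟩

lemma stepA (S : Submonoid A) {s₀ : A} (hs₀S : s₀ ∈ S) (M₀ : Submodule A B)
    (hM₀ : M₀.FG)
    (hs₀ : ∀ x : B, s₀ • x ∈ M₀) {J₀ : Ideal B}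
    (hgt : ∀ J : Ideal B, J₀ < J → Noe S (J.restrictScalars A))
    {N N' : Submodule A B} (hJN : J₀.restrictScalars A ≤ N) (hN' : N < N')
    (ha : ∃ a : A, ¬ (∃ t ∈ S, algebraMap A B (t * a) ∈ J₀) ∧
      ∃ t ∈ S, ∀ β : B, algebraMap A B (t * a) * β ∈ N') :
    Fin2 S N' (J₀.restrictScalars A) := by
  obtain ⟨a, hnaS, t₁, ht₁S, hc⟩ := ha
  set c : B := algebraMap A B (t₁ * a) with hcdef
  set J₁ : Ideal B := J₀ ⊔ Ideal.span {c} with hJ₁def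
  have hJ₁gt : J₀ < J₁ := by
    refine lt_of_le_of_ne le_sup_left (fun h => hnaS ⟨t₁, ht₁S, ?_⟩)
    have hcJ₁ : c ∈ J₁ := (le_sup_right : Ideal.span {c} ≤ J₁) (Ideal.subset_span rfl)
    rw [← h] at hcJ₁
    exact hcJ₁
  have hNoe1 := hgt J₁ hJ₁gt
  have hspanN' : ∀ z ∈ Ideal.span {c}, z ∈ N' := by
    intro z hz
    obtain ⟨β, rfl⟩ := Ideal.mem_span_singleton'.1 hz
    rw [mul_comm]
    exact hc β
  have hJ₁N' : J₁.restrictScalars A ≤ N' := by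
    intro x hx
    obtain ⟨j, hj, z, hz, rfl⟩ := Submodule.mem_sup.1 (show x ∈ J₀ ⊔ Ideal.span {c} from hx)
    exact N'.add_mem (hN'.le (hJN hj)) (hspanN' z hz)
  obtain ⟨F₁, hF₁fg, hF₁le, s₁, hs₁S, hs₁⟩ := hNoe1 N' hJ₁N'
  obtain ⟨Fc, hFcfg, hFcle, hFc⟩ := absorb M₀ hM₀ hs₀ (Ideal.span {c}) ⟨{c}, by simp⟩
  have hFcN' : Fc ≤ N' := le_trans hFcle (fun x hx => hspanN' x hx)
  refine ⟨F₁ ⊔ Fc, hF₁fg.sup hFcfg, sup_le hF₁le hFcN', s₀ * s₁,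
    S.mul_mem hs₀S hs₁S, ?_⟩
  intro x hx
  obtain ⟨f, hf, z, hz, hfz⟩ := Submodule.mem_sup.1 (hs₁ x hx)
  obtain ⟨j, hj, w, hw, rfl⟩ := Submodule.mem_sup.1
    (show z ∈ J₀ ⊔ Ideal.span {c} from hz)
  have e : (s₀ * s₁) • x = (s₀ • f + s₀ • w) + s₀ • j := by
    rw [mul_smul, ← hfz, smul_add, smul_add]
    abel
  rw [e]
  exact Submodule.add_mem _
    (Submodule.mem_sup_left (Submodule.add_mem _
      (Submodule.mem_sup_left (F₁.smul_mem _ hf))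
      (Submodule.mem_sup_right (hFc w hw))))
    (Submodule.mem_sup_right ((J₀.restrictScalars A).smul_mem s₀ hj))

def kk {n : ℕ} (b : Fin n → B) (N : Submodule A B) (j : ℕ) : Ideal A :=
  ⨅ (i : Fin n) (_ : (i : ℕ) < j),
    Submodule.comap (LinearMap.toSpanSingleton A B (b i)) N

lemma kk_mem {n : ℕ} {b : Fin n → B} {N : Submodule A B} {j : ℕ} {a : A} :
    a ∈ kk b N j ↔ ∀ i : Fin n, (i : ℕ) < j → a • b i ∈ N := by
  simp [kk, Submodule.mem_iInf, Submodule.mem_comap, LinearMap.toSpanSingleton_apply]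

lemma stepB (S : Submonoid A) {n : ℕ} (b : Fin n → B) {J₀ : Ideal B}
    {N : Submodule A B} (hJN : J₀.restrictScalars A ≤ N)
    (hA : ∀ N' : Submodule A B, N < N' → Fin2 S N' (J₀.restrictScalars A))
    (I : Ideal A) (j : ℕ) :
    ∃ If : Ideal A, If.FG ∧ If ≤ I ∧ ∃ s ∈ S, ∀ a ∈ I,
      s * a ∈ If ⊔ (I ⊓ kk b N j) := by
  classical
  induction j with
  | zero =>
    refine ⟨⊥, Submodule.fg_bot, bot_le, 1, S.one_mem, fun a ha => ?_⟩
    rw [one_mul]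
    exact Submodule.mem_sup_right ⟨ha, kk_mem.2 fun i hi => absurd hi (Nat.not_lt_zero _)⟩
  | succ j ih =>
    by_cases hjn : j < n
    · obtain ⟨If, hfg, hle, s, hsS, hs⟩ := ih
      set i₀ : Fin n := ⟨j, hjn⟩ with hi₀
      set φ := LinearMap.toSpanSingleton A B (b i₀) with hφ
      set Q : Submodule A B := N ⊔ Submodule.map φ ((I ⊓ kk b N j) : Ideal A) with hQdef
      have hkstep : ∀ d : A, d ∈ I ⊓ kk b N j → d • b i₀ ∈ N → d ∈ I ⊓ kk b N (j+1) := by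
        intro d hd hdb
        refine ⟨hd.1, kk_mem.2 fun i hi => ?_⟩
        rcases Nat.lt_succ_iff_lt_or_eq.1 hi with h | h
        · exact kk_mem.1 hd.2 i h
        · rw [show i = i₀ from Fin.ext h]
          exact hdb
      by_cases hQ : Q ≤ N
      · refine ⟨If, hfg, hle, s, hsS, fun a ha => ?_⟩
        obtain ⟨f, hf, d, hd, hsum⟩ := Submodule.mem_sup.1 (hs a ha)
        rw [← hsum]
        refine Submodule.add_mem _ (Submodule.mem_sup_left hf)
          (Submodule.mem_sup_right (hkstep d hd ?_))
        exact hQ (Submodule.mem_sup_right (Submodule.mem_map_of_mem hd))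
      · have hlt : N < Q := lt_iff_le_not_ge.2 ⟨le_sup_left, hQ⟩
        obtain ⟨F, hFfg, hFle, s', hs'S, hs'⟩ := hA Q hlt
        obtain ⟨T, hT⟩ := hFfg
        have hdec : ∀ g : {x : B // x ∈ T}, ∃ ν ∈ N, ∃ dc ∈ I ⊓ kk b N j,
            ν + dc • b i₀ = (g : B) := by
          intro g
          have hgQ : (g : B) ∈ Q := hFle (hT ▸ Submodule.subset_span g.2)
          obtain ⟨ν, hν, m, hm, hsum⟩ := Submodule.mem_sup.1 hgQ
          obtain ⟨dc, hdc, rfl⟩ := hm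
          exact ⟨ν, hν, dc, hdc, by simpa [hφ, LinearMap.toSpanSingleton_apply] using hsum⟩
        choose ν hν d hd hsum using hdec
        set D : Ideal A := Ideal.span (Set.range d) with hD
        have hDfg : D.FG := Submodule.fg_span (Set.finite_range d)
        have hDle : D ≤ I := by
          rw [hD, Ideal.span_le]
          rintro _ ⟨g, rfl⟩
          exact (hd g).1
        have key : ∀ dd ∈ I ⊓ kk b N j, s' * dd ∈ D ⊔ (I ⊓ kk b N (j+1)) := by
          intro dd hdd
          have hmem : dd • b i₀ ∈ Q :=
            Submodule.mem_sup_right (Submodule.mem_map_of_mem hdd)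
          obtain ⟨f, hf, z, hz, hfz⟩ := Submodule.mem_sup.1 (hs' _ hmem)
          rw [← hT] at hf
          obtain ⟨e, -, he⟩ := Submodule.mem_span_finset.1 hf
          set dd' : A := ∑ g ∈ T.attach, e (g : B) * d g with hdd'
          have hfeq : f = (∑ g ∈ T.attach, e (g : B) • ν g) + dd' • b i₀ := by
            rw [← he, ← Finset.sum_attach T (fun g => e g • g)]
            rw [hdd', Finset.sum_smul]
            rw [← Finset.sum_add_distrib]
            refine Finset.sum_congr rfl fun g _ => ?_
            rw [← hsum g, smul_add, mul_smul]
          have hkey2 : (s' * dd - dd') • b i₀ ∈ N := by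
            have heq : (s' * dd - dd') • b i₀ = (∑ g ∈ T.attach, e (g : B) • ν g) + z := by
              rw [sub_smul, mul_smul, ← hfz, hfeq]
              abel
            rw [heq]
            exact N.add_mem (Submodule.sum_mem _ fun g _ => N.smul_mem _ (hν g)) (hJN hz)
          have h1 : s' * dd - dd' ∈ I :=
            sub_mem (I.mul_mem_left s' hdd.1)
              (Submodule.sum_mem _ fun g _ => I.mul_mem_left _ (hd g).1)
          have h2 : s' * dd - dd' ∈ kk b N j :=
            sub_mem ((kk b N j).mul_mem_left s' hdd.2)
              (Submodule.sum_mem _ fun g _ => (kk b N j).mul_mem_left _ (hd g).2)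
          have h3 : s' * dd - dd' ∈ kk b N (j+1) := by
            refine kk_mem.2 fun i hi => ?_
            rcases Nat.lt_succ_iff_lt_or_eq.1 hi with h | h
            · exact kk_mem.1 h2 i h
            · rw [show i = i₀ from Fin.ext h]
              exact hkey2
          have hdd'D : dd' ∈ D := Submodule.sum_mem _ fun g _ =>
            D.mul_mem_left _ (Ideal.subset_span ⟨g, rfl⟩)
          have hre : s' * dd = dd' + (s' * dd - dd') := by ring
          rw [hre]
          exact Submodule.add_mem _ (Submodule.mem_sup_left hdd'D)
            (Submodule.mem_sup_right ⟨h1, h3⟩)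
        refine ⟨If ⊔ D, Submodule.FG.sup hfg hDfg, sup_le hle hDle, s' * s,
          S.mul_mem hs'S hsS, fun a ha => ?_⟩
        obtain ⟨f₂, hf₂, dd, hdd, hsum₂⟩ := Submodule.mem_sup.1 (hs a ha)
        obtain ⟨p, hp, q, hq, hpq⟩ := Submodule.mem_sup.1 (key dd hdd)
        have hfin : (s' * s) * a = (s' * f₂ + p) + q := by
          rw [mul_assoc, ← hsum₂, mul_add, ← hpq]
          ring
        rw [hfin]
        exact Submodule.add_mem _ (Submodule.mem_sup_left (Submodule.add_mem _
          (Submodule.mem_sup_left (If.mul_mem_left _ hf₂))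
          (Submodule.mem_sup_right hp)))
          (Submodule.mem_sup_right hq)
    · have hkk : kk b N (j+1) = kk b N j := by
        ext a
        rw [kk_mem, kk_mem]
        exact ⟨fun h i hi => h i (Nat.lt_succ_of_lt hi),
          fun h i _ => h i (lt_of_lt_of_le i.isLt (Nat.not_lt.1 hjn))⟩
      rw [hkk]
      exact ih

lemma stepBC (S : Submonoid A) {s₀ : A} (hs₀S : s₀ ∈ S) {n : ℕ} {b : Fin n → B}
    {M₀ : Submodule A B} (hb : Submodule.span A (Set.range b) = M₀)
    (hs₀ : ∀ x : B, s₀ • x ∈ M₀) {J₀ : Ideal B} {N : Submodule A B}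
    (hJN : J₀.restrictScalars A ≤ N)
    (hA : ∀ N' : Submodule A B, N < N' → Fin2 S N' (J₀.restrictScalars A))
    (hSig : ∀ a : A, (∃ t ∈ S, ∀ β : B, algebraMap A B (t * a) * β ∈ N) →
      ∃ t ∈ S, algebraMap A B (t * a) ∈ J₀)
    {u : A}
    (hkill : ∀ a : A, (∃ t ∈ S, algebraMap A B (t * a) ∈ J₀) →
      algebraMap A B (u * a) ∈ J₀) :
    ∀ I : Ideal A, ∃ If : Ideal A, If.FG ∧ If ≤ I ∧ ∃ s ∈ S, ∀ a ∈ I,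
      ∃ f ∈ If, ∃ dc : A, s * a = f + dc ∧ algebraMap A B (u * dc) ∈ J₀ := by
  intro I
  obtain ⟨If, hfg, hle, s, hsS, hs⟩ := stepB S b hJN hA I n
  refine ⟨If, hfg, hle, s, hsS, fun a ha => ?_⟩
  obtain ⟨f, hf, dc, hdc, hsum⟩ := Submodule.mem_sup.1 (hs a ha)
  refine ⟨f, hf, dc, hsum.symm, ?_⟩
  apply hkill
  apply hSig
  refine ⟨s₀, hs₀S, fun β => ?_⟩
  have hM : ∀ mm ∈ M₀, algebraMap A B dc * mm ∈ N := by
    intro mm hmm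
    rw [← hb] at hmm
    induction hmm using Submodule.span_induction with
    | mem g hg =>
      obtain ⟨i, rfl⟩ := hg
      have := kk_mem.1 hdc.2 i i.isLt
      rwa [Algebra.smul_def] at this
    | zero => simp
    | add x y hx hy ihx ihy => rw [mul_add]; exact N.add_mem ihx ihy
    | smul r x hx ih => rw [mul_smul_comm]; exact N.smul_mem r ih
  have e : algebraMap A B (s₀ * dc) * β = algebraMap A B dc * (s₀ • β) := by
    rw [Algebra.smul_def, mul_comm s₀ dc, map_mul]
    ring
  rw [e]
  exact hM _ (hs₀ β)

def Mj (A : Type*) {B : Type*} [CommRing A] [CommRing B] [Algebra A B]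
    {n : ℕ} (b : Fin n → B) (j : ℕ) : Submodule A B :=
  Submodule.span A (b '' {i | (i : ℕ) < j})

lemma stepD (S : Submonoid A) {n : ℕ} (b : Fin n → B) {J₀ : Ideal B} {u : A}
    (huS : u ∈ S)
    (hBC : ∀ I : Ideal A, ∃ If : Ideal A, If.FG ∧ If ≤ I ∧ ∃ s ∈ S, ∀ a ∈ I,
      ∃ f ∈ If, ∃ dc : A, s * a = f + dc ∧ algebraMap A B (u * dc) ∈ J₀) :
    ∀ (j : ℕ) (Q : Submodule A B), Q ≤ Mj A b j → Fin2 S Q (J₀.restrictScalars A) := by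
  classical
  intro j
  induction j with
  | zero =>
    intro Q hQ
    have hM0 : Mj A b 0 = ⊥ := by simp [Mj]
    refine ⟨⊥, Submodule.fg_bot, bot_le, 1, S.one_mem, fun x hx => ?_⟩
    have hx0 : x = 0 := by simpa using (hM0 ▸ hQ) hx
    rw [hx0, smul_zero]
    exact zero_mem _
  | succ j ihj =>
    intro Q hQle
    by_cases hjn : j < n
    swap
    · have hMeq : Mj A b (j+1) = Mj A b j := by
        unfold Mj
        refine congrArg _ (congrArg _ ?_)
        ext i
        have := i.isLt
        simp only [Set.mem_setOf_eq]
        omega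
      exact ihj Q (hMeq ▸ hQle)
    · set i₀ : Fin n := ⟨j, hjn⟩ with hi₀def
      have hset : b '' {i : Fin n | (i : ℕ) < j+1} =
          b '' {i : Fin n | (i : ℕ) < j} ∪ {b i₀} := by
        rw [← Set.image_singleton (f := b), ← Set.image_union]
        refine congrArg _ ?_
        ext i
        simp only [Set.mem_setOf_eq, Set.union_singleton, Set.mem_insert_iff]
        constructor
        · intro h
          rcases Nat.lt_succ_iff_lt_or_eq.1 h with h | h
          · exact Or.inr h
          · exact Or.inl (Fin.ext h)
        · rintro (rfl | h)
          · exact Nat.lt_succ_self j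
          · exact Nat.lt_succ_of_lt h
      have hsplit : Mj A b (j+1) = Mj A b j ⊔ Submodule.span A {b i₀} := by
        unfold Mj
        rw [hset, Submodule.span_union]
      set I : Ideal A :=
        Submodule.comap (LinearMap.toSpanSingleton A B (b i₀)) (Q ⊔ Mj A b j) with hIdef
      obtain ⟨If, hIffg, hIfle, s₂, hs₂S, hstep⟩ := hBC I
      obtain ⟨Tf, hTf⟩ := hIffg
      have hgen : ∀ g : {x : A // x ∈ Tf}, ∃ qe ∈ Q, ∃ z ∈ Mj A b j,
          qe + z = (g : A) • b i₀ := by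
        intro g
        have hgI : (g : A) ∈ I := hIfle (hTf ▸ Ideal.subset_span g.2)
        exact Submodule.mem_sup.1 hgI
      choose qe hqe z hz hqz using hgen
      set Fq : Submodule A B := Submodule.span A (Set.range qe) with hFqdef
      have hFqfg : Fq.FG := Submodule.fg_span (Set.finite_range qe)
      have hFqQ : Fq ≤ Q := Submodule.span_le.2 (by rintro _ ⟨g, rfl⟩; exact hqe g)
      set R : Submodule A B := Mj A b j ⊓ (Q ⊔ J₀.restrictScalars A) with hRdef
      obtain ⟨FR, hFRfg, hFRle, s₃, hs₃S, hs₃⟩ := ihj R inf_le_left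
      obtain ⟨FR', hFR'fg, hFR'Q, hFRproj⟩ :=
        split_fg hFRfg (le_trans hFRle inf_le_right)
      refine ⟨Fq ⊔ FR', Submodule.FG.sup hFqfg hFR'fg, sup_le hFqQ hFR'Q,
        s₃ * (u * s₂), S.mul_mem hs₃S (S.mul_mem huS hs₂S), ?_⟩
      intro x hx
      obtain ⟨y, hy, w, hw, hyw⟩ := Submodule.mem_sup.1 ((hsplit ▸ hQle) hx)
      obtain ⟨a, rfl⟩ := Submodule.mem_span_singleton.1 hw
      have haI : a ∈ I := by
        have hab : a • b i₀ = x - y := by rw [← hyw]; abel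
        show a • b i₀ ∈ Q ⊔ Mj A b j
        rw [hab]
        exact sub_mem (Submodule.mem_sup_left hx) (Submodule.mem_sup_right hy)
      obtain ⟨f, hf, dc, hdc_eq, hdcJ⟩ := hstep a haI
      rw [← hTf] at hf
      obtain ⟨cf, -, hcf⟩ := Submodule.mem_span_finset.1 hf
      set wq : B := ∑ g ∈ Tf.attach, cf (g : A) • qe g with hwqdef
      set wz : B := ∑ g ∈ Tf.attach, cf (g : A) • z g with hwzdef
      have hwqFq : wq ∈ Fq :=
        Submodule.sum_mem _ fun g _ => Fq.smul_mem _ (Submodule.subset_span ⟨g, rfl⟩)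
      have hwzMj : wz ∈ Mj A b j :=
        Submodule.sum_mem _ fun g _ => Submodule.smul_mem _ _ (hz g)
      have hfb : f • b i₀ = wq + wz := by
        rw [← hcf, Finset.sum_smul, ← Finset.sum_attach Tf (fun g => (cf g • g) • b i₀),
          hwqdef, hwzdef, ← Finset.sum_add_distrib]
        refine Finset.sum_congr rfl fun g _ => ?_
        rw [smul_eq_mul, mul_smul, ← hqz g, smul_add]
      set m : B := (u * s₂) • y + u • wz with hmdef
      have e4 : (u * s₂) • x = m + (u • wq + (u * dc) • b i₀) := by
        have e2 : s₂ • x = s₂ • y + (f + dc) • b i₀ := by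
          rw [← hyw, smul_add, smul_smul, hdc_eq]
        rw [mul_smul, e2, hmdef]
        rw [add_smul, hfb]
        rw [smul_add, smul_add, smul_add, mul_smul, mul_smul]
        abel
      have hdcJ' : (u * dc) • b i₀ ∈ J₀.restrictScalars A := by
        rw [Algebra.smul_def]
        exact J₀.mul_mem_right _ hdcJ
      have hmMj : m ∈ Mj A b j :=
        add_mem (Submodule.smul_mem _ _ hy) (Submodule.smul_mem _ _ hwzMj)
      have hmQJ : m ∈ Q ⊔ J₀.restrictScalars A := by
        have hm_eq : m = (u * s₂) • x - u • wq - (u * dc) • b i₀ := by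
          rw [e4]; abel
        rw [hm_eq]
        exact sub_mem (sub_mem (Submodule.mem_sup_left (Q.smul_mem _ hx))
          (Submodule.mem_sup_left (hFqQ (Fq.smul_mem _ hwqFq))))
          (Submodule.mem_sup_right hdcJ')
      have hsm : s₃ • m ∈ (Fq ⊔ FR') ⊔ J₀.restrictScalars A := by
        have h1 := hs₃ m ⟨hmMj, hmQJ⟩
        have h2 : FR ⊔ J₀.restrictScalars A ≤ (Fq ⊔ FR') ⊔ J₀.restrictScalars A :=
          sup_le (hFRproj.trans (sup_le
            ((le_sup_right : FR' ≤ Fq ⊔ FR').trans le_sup_left) le_sup_right)) le_sup_right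
        exact h2 h1
      have efin : (s₃ * (u * s₂)) • x =
          s₃ • m + (s₃ • (u • wq) + s₃ • ((u * dc) • b i₀)) := by
        rw [mul_smul, e4, smul_add, smul_add, smul_add]
      rw [efin]
      refine add_mem hsm (add_mem ?_ ?_)
      · exact Submodule.mem_sup_left
          (Submodule.mem_sup_left (Fq.smul_mem _ (Fq.smul_mem _ hwqFq)))
      · exact Submodule.mem_sup_right ((J₀.restrictScalars A).smul_mem s₃ hdcJ')

end EN13

theorem stmt13 {A B : Type*} [CommRing A] [CommRing B] [Algebra A B]
    (hinj : Function.Injective (algebraMap A B)) (S : Submonoid A)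
    (hfin : SFin S (⊤ : Submodule A B))
    (hB : SNoeth (S.map (algebraMap A B)) B) : SNoeth S A := by
  classical
  obtain ⟨M₀, hM₀fg, -, s₀, hs₀S, hs₀'⟩ := hfin
  have hs₀ : ∀ x : B, s₀ • x ∈ M₀ := fun x => hs₀' x trivial
  obtain ⟨n, b, hb⟩ := Submodule.fg_iff_exists_fin_generating_family.1 hM₀fg
  have main : ∀ J : Ideal B, EN13.Noe S (J.restrictScalars A) := by
    intro J
    by_contra hJbad
    obtain ⟨J₀, hJ₀bad, hgt⟩ := EN13.zorn1 S hs₀S M₀ hM₀fg hs₀ hB hJbad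
    obtain ⟨u₀, hu₀S, hkill⟩ := EN13.killer S hB J₀
    obtain ⟨N, hJN, hSig, hwit⟩ := EN13.zorn2 S hs₀S b hb hs₀ J₀
    have hA : ∀ N' : Submodule A B, N < N' → EN13.Fin2 S N' (J₀.restrictScalars A) :=
      fun N' hlt => EN13.stepA S hs₀S M₀ hM₀fg hs₀ hgt hJN hlt (hwit N' hlt)
    have hBC := EN13.stepBC S hs₀S hb hs₀ hJN hA hSig hkill
    have hDall := EN13.stepD S b hu₀S hBC
    apply hJ₀bad
    intro N'' hN''
    have hMn : EN13.Mj A b n = M₀ := by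
      unfold EN13.Mj
      rw [← hb]
      refine congrArg _ ?_
      ext x
      simp [Fin.isLt]
    obtain ⟨F, hFfg, hFle, s, hsS, hsQ⟩ := hDall n (M₀ ⊓ N'') (hMn ▸ inf_le_left)
    refine ⟨F, hFfg, le_trans hFle inf_le_right, s * s₀, S.mul_mem hsS hs₀S, ?_⟩
    intro x hx
    rw [mul_smul]
    exact hsQ _ ⟨hs₀ x, N''.smul_mem s₀ hx⟩
  intro I
  have hbot := main ⊥ (Submodule.map (Algebra.linearMap A B) I) bot_le
  obtain ⟨F, hFfg, hFle, s, hsS, hs⟩ := hbot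
  have hsF : ∀ x ∈ Submodule.map (Algebra.linearMap A B) I, s • x ∈ F := by
    intro x hx
    have := hs x hx
    rwa [Submodule.restrictScalars_bot, sup_bot_eq] at this
  obtain ⟨T, hT⟩ := hFfg
  have hgen : ∀ g : {x : B // x ∈ T}, ∃ a ∈ I, Algebra.linearMap A B a = (g : B) := by
    intro g
    exact Submodule.mem_map.1 (hFle (hT ▸ Submodule.subset_span g.2))
  choose w hwI hw using hgen
  refine ⟨Submodule.span A (Set.range w), Submodule.fg_span (Set.finite_range w),
    Submodule.span_le.2 (by rintro _ ⟨g, rfl⟩; exact hwI g), s, hsS, ?_⟩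
  intro a ha
  have h1 : s • algebraMap A B a ∈ F :=
    hsF _ (Submodule.mem_map_of_mem ha)
  have h2 : F ≤ Submodule.map (Algebra.linearMap A B) (Submodule.span A (Set.range w)) := by
    rw [← hT, Submodule.span_le]
    intro g hg
    exact ⟨w ⟨g, hg⟩, Submodule.subset_span ⟨⟨g, hg⟩, rfl⟩, hw ⟨g, hg⟩⟩
  obtain ⟨a', ha', heq⟩ := Submodule.mem_map.1 (h2 h1)
  have : algebraMap A B a' = algebraMap A B (s * a) := by
    rw [show (Algebra.linearMap A B) a' = algebraMap A B a' from rfl] at heq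
    rw [heq, Algebra.smul_def, ← map_mul]
  have haa : a' = s * a := hinj this
  rw [show s • a = s * a from rfl, ← haa]
  exact ha'
end

section
/- Let A ⊆ B be a faithfully flat extension of commutative rings in the sense that aB ∩ A = a for every ideal a ⊆ A, and let S ⊆ A be multiplicatively closed. If B is S-noetherian (with respect to the image of S in B), then A is S-noetherian. -/
private lemma aux14 {A B : Type*} [CommRing A] [CommRing B] [Algebra A B]
    (N : Ideal A) (t : B) (ht : t ∈ N.map (algebraMap A B)) :
    ∃ V : Finset A, ↑V ⊆ (N : Set A) ∧
      t ∈ Ideal.map (algebraMap A B) (Ideal.span ↑V) := by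
  classical
  rw [Ideal.map, Ideal.span] at ht
  obtain ⟨u, hu, htu⟩ := Submodule.mem_span_finite_of_mem_span ht
  obtain ⟨V, hV, huV⟩ := Finset.subset_set_image_iff.mp hu
  refine ⟨V, hV, ?_⟩
  rw [Ideal.map_span]
  refine Submodule.span_mono ?_ htu
  rw [← huV]
  simp

theorem stmt14 {A B : Type*} [CommRing A] [CommRing B] [Algebra A B]
    (hinj : Function.Injective (algebraMap A B)) (S : Submonoid A)
    (hff : ∀ a : Ideal A, (a.map (algebraMap A B)).comap (algebraMap A B) = a)
    (hB : SNoeth (S.map (algebraMap A B)) B) : SNoeth S A := by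
  classical
  intro N
  obtain ⟨F, hFG, hFle, s, hsS, hs⟩ := hB (Ideal.map (algebraMap A B) N)
  obtain ⟨T, hT⟩ := hFG
  have H : ∀ t : T, ∃ V : Finset A, ↑V ⊆ (N : Set A) ∧
      (t : B) ∈ Ideal.map (algebraMap A B) (Ideal.span ↑V) := by
    intro t
    exact aux14 N (t : B) (hFle (hT ▸ Submodule.subset_span t.2))
  choose V hV1 hV2 using H
  let W : Finset A := T.attach.biUnion fun t => V t
  have hWN : (↑W : Set A) ⊆ (N : Set A) := by
    intro a ha
    simp only [W, Finset.coe_biUnion, Set.mem_iUnion, Finset.mem_coe] at ha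
    obtain ⟨t, _, hat⟩ := ha
    exact hV1 t hat
  have hFle' : F ≤ Ideal.map (algebraMap A B) (Ideal.span ↑W) := by
    rw [← hT, Submodule.span_le]
    intro t ht
    refine Ideal.map_mono (Ideal.span_mono ?_) (hV2 ⟨t, ht⟩)
    intro a ha
    exact Finset.mem_coe.mpr (Finset.mem_biUnion.mpr ⟨⟨t, ht⟩, Finset.mem_attach _ _, ha⟩)
  obtain ⟨s₀, hs₀S, rfl⟩ := hsS
  refine ⟨Ideal.span ↑W, ⟨W, rfl⟩, Ideal.span_le.mpr hWN, s₀, hs₀S, ?_⟩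
  intro x hx
  have hx' : algebraMap A B s₀ • algebraMap A B x ∈ F :=
    hs _ (Ideal.mem_map_of_mem _ hx)
  have : algebraMap A B (s₀ * x) ∈ Ideal.map (algebraMap A B) (Ideal.span ↑W) := by
    rw [map_mul]
    exact hFle' hx'
  have := (hff (Ideal.span ↑W)) ▸ (Ideal.mem_comap.mpr this)
  simpa [smul_eq_mul] using this
end

section
/- (Relative Hilbert basis theorem) Let A be a commutative ring and S ⊆ A an anti-archimedean multiplicatively closed subset (for every s ∈ S the intersection ⋂ₙ sⁿA meets S). If A is S-noetherian, then the polynomial ring A[X] is S-noetherian (regarding S as a subset of A[X]). -/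
open Polynomial in
/-- Any `A`-submodule of polynomials of degree `< n` is `S`-finite, when `A` is
`S`-noetherian. -/
lemma sfin_of_le_degreeLT {A : Type*} [CommRing A] (S : Submonoid A)
    (hA : SNoeth S A) :
    ∀ n : ℕ, ∀ M : Submodule A (Polynomial A), M ≤ Polynomial.degreeLT A n → SFin S M := by
  intro n
  induction n with
  | zero =>
    intro M hM
    refine ⟨⊥, Submodule.fg_bot, bot_le, 1, S.one_mem, fun x hx => ?_⟩
    have hx0 : x = 0 := by
      have h := Polynomial.mem_degreeLT.mp (hM hx)
      rw [Nat.cast_zero] at h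
      exact Polynomial.degree_eq_bot.mp (by simpa using Nat.WithBot.lt_zero_iff.mp h)
    simp [hx0]
  | succ n ih =>
    intro M hM
    obtain ⟨F1, hF1fg, hF1le, s1, hs1S, hs1⟩ := hA (M.map (Polynomial.lcoeff A n))
    obtain ⟨T1, hT1⟩ := hF1fg
    have hlift : ∀ a ∈ T1, ∃ q ∈ M, Polynomial.coeff q n = a := by
      intro a ha
      have : a ∈ M.map (Polynomial.lcoeff A n) :=
        hF1le (hT1 ▸ Submodule.subset_span ha)
      obtain ⟨q, hq, hq2⟩ := this
      exact ⟨q, hq, hq2⟩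
    choose! g hg1 hg2 using hlift
    obtain ⟨F0, hF0fg, hF0le, s0, hs0S, hs0⟩ := ih (M ⊓ Polynomial.degreeLT A n) inf_le_right
    refine ⟨F0 ⊔ Submodule.span A (g '' T1),
      hF0fg.sup (Submodule.fg_span ((T1.finite_toSet).image _)), ?_, s0 * s1,
      S.mul_mem hs0S hs1S, ?_⟩
    · refine sup_le (hF0le.trans inf_le_left) (Submodule.span_le.mpr ?_)
      rintro _ ⟨a, ha, rfl⟩
      exact hg1 a ha
    · intro x hx
      have h1 : s1 • Polynomial.coeff x n ∈ Submodule.span A (T1 : Set A) := by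
        rw [hT1]; exact hs1 _ ⟨x, hx, rfl⟩
      obtain ⟨c, -, hc⟩ := Submodule.mem_span_finset.mp h1
      set y := s1 • x - ∑ a ∈ T1, c a • g a with hy
      have hyM : y ∈ M :=
        M.sub_mem (M.smul_mem _ hx)
          (Submodule.sum_mem _ fun a ha => M.smul_mem _ (hg1 a ha))
      have hcoeff : ∀ z ∈ M, ∀ m : ℕ, n + 1 ≤ m → Polynomial.coeff z m = 0 := by
        intro z hz m hm
        have := Polynomial.mem_degreeLT.mp (hM hz)
        exact (Polynomial.degree_lt_iff_coeff_zero z (n + 1)).mp this m (by exact_mod_cast hm)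
      have hyd : y ∈ Polynomial.degreeLT A n := by
        rw [Polynomial.mem_degreeLT]
        rw [Polynomial.degree_lt_iff_coeff_zero]
        intro m hm
        have hm' : n ≤ m := by exact_mod_cast hm
        rcases eq_or_lt_of_le hm' with heq | hmgt
        · rw [← heq]
          have hsum : Polynomial.coeff (∑ a ∈ T1, c a • g a) n
              = ∑ a ∈ T1, c a * Polynomial.coeff (g a) n := by
            rw [Polynomial.finset_sum_coeff]
            exact Finset.sum_congr rfl fun a _ => by rw [Polynomial.coeff_smul, smul_eq_mul]
          have : Polynomial.coeff y n
              = s1 * Polynomial.coeff x n - ∑ a ∈ T1, c a * Polynomial.coeff (g a) n := by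
            rw [hy, Polynomial.coeff_sub, Polynomial.coeff_smul, smul_eq_mul, hsum]
          rw [this]
          have : ∑ a ∈ T1, c a * Polynomial.coeff (g a) n = s1 * Polynomial.coeff x n := by
            rw [show s1 * Polynomial.coeff x n = s1 • Polynomial.coeff x n from rfl, ← hc]
            refine Eq.symm ?_
            refine Finset.sum_congr rfl fun a ha => ?_
            rw [smul_eq_mul, hg2 a ha]
          rw [this, sub_self]
        · have hm1 : n + 1 ≤ m := hmgt
          rw [hy, Polynomial.coeff_sub, Polynomial.coeff_smul, smul_eq_mul,
            hcoeff x hx m hm1, Polynomial.finset_sum_coeff]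
          rw [mul_zero, zero_sub, neg_eq_zero]
          refine Finset.sum_eq_zero fun a ha => ?_
          rw [Polynomial.coeff_smul, hcoeff (g a) (hg1 a ha) m hm1, smul_zero]
      have hxeq : (s0 * s1) • x = s0 • y + ∑ a ∈ T1, (s0 * c a) • g a := by
        rw [hy, smul_sub, mul_smul, Finset.smul_sum]
        simp only [smul_smul]
        abel
      rw [hxeq]
      refine Submodule.add_mem _ (Submodule.mem_sup_left (hs0 y ⟨hyM, hyd⟩))
        (Submodule.sum_mem _ fun a ha => Submodule.mem_sup_right ?_)
      exact Submodule.smul_mem _ _ (Submodule.subset_span ⟨a, ha, rfl⟩)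

theorem stmt15 {A : Type*} [CommRing A] (S : Submonoid A)
    (hanti : ∀ s ∈ S, ∃ t ∈ S, ∀ n : ℕ, s ^ n ∣ t)
    (hA : SNoeth S A) :
    SNoeth (S.map (Polynomial.C : A →+* Polynomial A)) (Polynomial A) := by
  classical
  intro b
  obtain ⟨F1, hF1fg, hF1le, s, hsS, hs⟩ := hA (Ideal.leadingCoeff (b : Ideal (Polynomial A)))
  obtain ⟨T, hT⟩ := hF1fg
  have hTl : ∀ a ∈ T, ∃ q ∈ b, q.leadingCoeff = a := by
    intro a ha
    exact (Ideal.mem_leadingCoeff _ _).mp (hF1le (hT ▸ Submodule.subset_span ha))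
  choose! p hp1 hp2 using hTl
  set N : ℕ := T.sup (fun a => (p a).natDegree) + 1 with hN
  have hNd : ∀ a ∈ T, (p a).natDegree < N := fun a ha =>
    Nat.lt_succ_of_le (Finset.le_sup (f := fun a => (p a).natDegree) ha)
  have hN1 : 1 ≤ N := Nat.succ_le_succ (Nat.zero_le _)
  set J : Ideal (Polynomial A) := Ideal.span (↑(T.image p) : Set (Polynomial A)) with hJ
  have hJb : J ≤ b := by
    rw [hJ, Ideal.span_le]
    intro q hq
    simp only [Finset.coe_image, Set.mem_image, Finset.mem_coe] at hq
    obtain ⟨a, ha, rfl⟩ := hq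
    exact hp1 a ha
  set M : Submodule A (Polynomial A) :=
    b.restrictScalars A ⊓ Polynomial.degreeLT A N with hM
  set K : Submodule A (Polynomial A) := J.restrictScalars A ⊔ M with hK
  -- key degree reduction lemma
  have key : ∀ d : ℕ, ∀ f : Polynomial A, f ∈ b → f.natDegree ≤ d →
      ∃ m : ℕ, (Polynomial.C s) ^ m * f ∈ K := by
    intro d
    induction d using Nat.strong_induction_on with
    | _ d IH =>
      intro f hf hfd
      by_cases hfN : f.natDegree < N
      · -- f has small degree, so f ∈ M
        refine ⟨0, ?_⟩
        rw [pow_zero, one_mul]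
        refine Submodule.mem_sup_right (Submodule.mem_inf.mpr ⟨hf, ?_⟩)
        rw [Polynomial.mem_degreeLT]
        calc f.degree ≤ (f.natDegree : WithBot ℕ) := Polynomial.degree_le_natDegree
          _ < (N : WithBot ℕ) := by exact_mod_cast hfN
      · push_neg at hfN
        set e := f.natDegree with he
        have hf0 : f ≠ 0 := by
          intro h
          rw [h] at he
          simp only [Polynomial.natDegree_zero] at he
          omega
        have hlcf : s • f.leadingCoeff ∈ Submodule.span A (T : Set A) := by
          rw [hT]
          exact hs _ ((Ideal.mem_leadingCoeff _ _).mpr ⟨f, hf, rfl⟩)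
        obtain ⟨c, -, hc⟩ := Submodule.mem_span_finset.mp hlcf
        set g : Polynomial A := Polynomial.C s * f -
          ∑ a ∈ T, Polynomial.C (c a) *
            (Polynomial.X ^ (e - (p a).natDegree) * p a) with hg
        have hgb : g ∈ b := by
          refine Submodule.sub_mem _ (b.smul_mem _ hf) (Submodule.sum_mem _ fun a ha => ?_)
          exact Ideal.mul_mem_left _ _ (Ideal.mul_mem_left _ _ (hp1 a ha))
        have hsummand_deg : ∀ a ∈ T,
            (Polynomial.C (c a) *
              (Polynomial.X ^ (e - (p a).natDegree) * p a)).natDegree ≤ e := by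
          intro a ha
          calc (Polynomial.C (c a) *
              (Polynomial.X ^ (e - (p a).natDegree) * p a)).natDegree
              ≤ (Polynomial.C (c a)).natDegree +
                (Polynomial.X ^ (e - (p a).natDegree) * p a).natDegree :=
                Polynomial.natDegree_mul_le
            _ ≤ 0 + ((Polynomial.X ^ (e - (p a).natDegree) : Polynomial A).natDegree
                + (p a).natDegree) := by
                gcongr
                · exact le_of_eq (Polynomial.natDegree_C _)
                · exact Polynomial.natDegree_mul_le
            _ ≤ 0 + ((e - (p a).natDegree) + (p a).natDegree) := by
                gcongr
                exact Polynomial.natDegree_X_pow_le _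
            _ ≤ e := by
                have : (p a).natDegree ≤ e := le_trans (le_of_lt (hNd a ha)) hfN
                omega
        have hcoeffe : ∀ a ∈ T,
            Polynomial.coeff (Polynomial.X ^ (e - (p a).natDegree) * p a) e = a := by
          intro a ha
          have hpa : (p a).natDegree ≤ e := le_trans (le_of_lt (hNd a ha)) hfN
          rw [Polynomial.coeff_X_pow_mul', if_pos (by omega)]
          rw [show e - (e - (p a).natDegree) = (p a).natDegree from by omega,
            Polynomial.coeff_natDegree, hp2 a ha]
        have hgdeg : g.degree < (e : WithBot ℕ) := by
          rw [Polynomial.degree_lt_iff_coeff_zero]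
          intro m hm
          have hm' : e ≤ m := by exact_mod_cast hm
          rcases eq_or_lt_of_le hm' with heq | hmgt
          · rw [← heq]
            rw [hg, Polynomial.coeff_sub, Polynomial.coeff_C_mul,
              Polynomial.finset_sum_coeff]
            have h1 : ∑ a ∈ T, Polynomial.coeff (Polynomial.C (c a) *
                (Polynomial.X ^ (e - (p a).natDegree) * p a)) e
                = ∑ a ∈ T, c a * a := by
              refine Finset.sum_congr rfl fun a ha => ?_
              rw [Polynomial.coeff_C_mul, hcoeffe a ha]
            rw [h1]
            have h2 : ∑ a ∈ T, c a * a = s * f.leadingCoeff := by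
              rw [show s * f.leadingCoeff = s • f.leadingCoeff from rfl, ← hc]
              exact Finset.sum_congr rfl fun a _ => rfl
            rw [h2, he, Polynomial.coeff_natDegree, sub_self]
          · rw [hg, Polynomial.coeff_sub, Polynomial.coeff_C_mul,
              Polynomial.coeff_eq_zero_of_natDegree_lt (lt_of_le_of_lt (le_of_eq he.symm) hmgt),
              Polynomial.finset_sum_coeff, mul_zero, zero_sub, neg_eq_zero]
            refine Finset.sum_eq_zero fun a ha => ?_
            exact Polynomial.coeff_eq_zero_of_natDegree_lt
              (lt_of_le_of_lt (hsummand_deg a ha) hmgt)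
        have hgnd : g.natDegree < e := by
          by_cases hg0 : g = 0
          · rw [hg0, Polynomial.natDegree_zero]; omega
          · exact (Polynomial.natDegree_lt_iff_degree_lt hg0).mpr hgdeg
        have hed : e ≤ d := hfd
        obtain ⟨m, hm⟩ := IH g.natDegree (lt_of_lt_of_le hgnd hed) g hgb le_rfl
        refine ⟨m + 1, ?_⟩
        have heq : (Polynomial.C s) ^ (m + 1) * f
            = (Polynomial.C s) ^ m * g + (Polynomial.C s) ^ m *
              (∑ a ∈ T, Polynomial.C (c a) *
                (Polynomial.X ^ (e - (p a).natDegree) * p a)) := by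
          rw [hg]
          ring
        rw [heq]
        refine Submodule.add_mem _ hm (Submodule.mem_sup_left ?_)
        show _ ∈ J
        refine Ideal.mul_mem_left _ _ (Submodule.sum_mem _ fun a ha => ?_)
        refine Ideal.mul_mem_left _ _ (Ideal.mul_mem_left _ _ ?_)
        rw [hJ]
        exact Ideal.subset_span (by
          simp only [Finset.coe_image, Set.mem_image, Finset.mem_coe]
          exact ⟨a, ha, rfl⟩)
  obtain ⟨t, htS, htd⟩ := hanti s hsS
  have key2 : ∀ f ∈ b, Polynomial.C t * f ∈ K := by
    intro f hf
    obtain ⟨m, hm⟩ := key f.natDegree f hf le_rfl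
    obtain ⟨u, hu⟩ := htd m
    have : Polynomial.C t * f = u • ((Polynomial.C s) ^ m * f) := by
      rw [Polynomial.smul_eq_C_mul, hu]
      push_cast [map_mul, map_pow]
      ring
    rw [this]
    exact K.smul_mem u hm
  obtain ⟨F0, hF0fg, hF0le, s0, hs0S, hs0⟩ :=
    sfin_of_le_degreeLT S hA N M inf_le_right
  obtain ⟨T0, hT0⟩ := hF0fg
  refine ⟨J ⊔ Ideal.span (↑T0 : Set (Polynomial A)),
    Submodule.FG.sup ⟨T.image p, rfl⟩ ⟨T0, rfl⟩, ?_, Polynomial.C (t * s0),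
    ⟨t * s0, S.mul_mem htS hs0S, rfl⟩, ?_⟩
  · refine sup_le hJb (Ideal.span_le.mpr fun q hq => ?_)
    have hqF0 : q ∈ F0 := hT0 ▸ Submodule.subset_span hq
    exact (hF0le hqF0).1
  · intro f hf
    rw [smul_eq_mul]
    obtain ⟨y, hy, z, hz, hyz⟩ := Submodule.mem_sup.mp (key2 f hf)
    have heq : Polynomial.C (t * s0) * f = Polynomial.C s0 * y + s0 • z := by
      rw [Polynomial.smul_eq_C_mul, ← mul_add, hyz, ← mul_assoc, ← map_mul, mul_comm s0 t]
    rw [heq]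
    refine Submodule.add_mem _ (Submodule.mem_sup_left (Ideal.mul_mem_left _ _ hy)) ?_
    refine Submodule.mem_sup_right ?_
    have hzF0 : s0 • z ∈ F0 := hs0 z hz
    rw [← hT0] at hzF0
    have hle : Submodule.span A (↑T0 : Set (Polynomial A)) ≤
        (Ideal.span (↑T0 : Set (Polynomial A))).restrictScalars A :=
      Submodule.span_le.mpr fun q hq => Ideal.subset_span hq
    exact hle hzF0
end

section
/- (Relative Hilbert basis theorem for power series) Let A be a commutative ring and S ⊆ A an anti-archimedean multiplicatively closed subset. If A is S-noetherian, then the formal power series ring A⟦X⟧ is S-noetherian. -/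
namespace Stmt16Aux
open PowerSeries Finset

variable {A : Type*} [CommRing A]

lemma coeff_X_pow_mul_lt (p : PowerSeries A) {i k : ℕ} (h : i < k) :
    coeff i (X ^ k * p) = 0 := by
  rw [coeff_mul]
  apply Finset.sum_eq_zero
  rintro ⟨x, y⟩ hxy
  rw [Finset.HasAntidiagonal.mem_antidiagonal] at hxy
  have hx : x ≠ k := by omega
  simp [coeff_X_pow, hx]

/-- Elements of `N` whose first `n` coefficients vanish, as an `A`-submodule. -/
noncomputable def Kmod (N : Submodule (PowerSeries A) (PowerSeries A)) (n : ℕ) :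
    Submodule A (PowerSeries A) :=
  N.restrictScalars A ⊓ ⨅ i ∈ Finset.range n, LinearMap.ker (coeff i)

lemma mem_Kmod {N : Submodule (PowerSeries A) (PowerSeries A)} {n : ℕ} {f : PowerSeries A} :
    f ∈ Kmod N n ↔ f ∈ N ∧ ∀ i < n, coeff i f = 0 := by
  simp [Kmod, Submodule.mem_inf, Submodule.mem_iInf, LinearMap.mem_ker]

/-- The ideal of `n`-th coefficients of elements of `N` of order `≥ n`. -/
noncomputable def Lmod (N : Submodule (PowerSeries A) (PowerSeries A)) (n : ℕ) : Ideal A :=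
  (Kmod N n).map (coeff n)

lemma X_pow_mul_mem_Kmod {N : Submodule (PowerSeries A) (PowerSeries A)} {n : ℕ}
    {f : PowerSeries A} (hf : f ∈ Kmod N n) (k : ℕ) : X ^ k * f ∈ Kmod N (n + k) := by
  rw [mem_Kmod] at hf ⊢
  refine ⟨by simpa [smul_eq_mul] using N.smul_mem (X ^ k) hf.1, fun i hi => ?_⟩
  rcases lt_or_ge i k with h | h
  · exact coeff_X_pow_mul_lt f h
  · obtain ⟨d, rfl⟩ : ∃ d, i = d + k := ⟨i - k, by omega⟩
    rw [coeff_X_pow_mul]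
    exact hf.2 d (by omega)

lemma Lmod_mono {N : Submodule (PowerSeries A) (PowerSeries A)} {n n' : ℕ} (h : n ≤ n') :
    Lmod N n ≤ Lmod N n' := by
  rintro a ⟨f, hf, rfl⟩
  refine ⟨X ^ (n' - n) * f, ?_, ?_⟩
  · have := X_pow_mul_mem_Kmod hf (n' - n)
    rwa [show n + (n' - n) = n' by omega] at this
  · have := coeff_X_pow_mul f (n' - n) n
    rwa [show n + (n' - n) = n' by omega] at this

lemma C_mul_mem_Kmod {N : Submodule (PowerSeries A) (PowerSeries A)} {n : ℕ}
    {f : PowerSeries A} (hf : f ∈ Kmod N n) (r : A) : C r * f ∈ Kmod N n := by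
  rw [mem_Kmod] at hf ⊢
  exact ⟨by simpa [smul_eq_mul] using N.smul_mem (C r) hf.1,
    fun i hi => by rw [coeff_C_mul, hf.2 i hi, mul_zero]⟩

lemma coeff_mul_of_low_zero {g : PowerSeries A} {m : ℕ}
    (hg : ∀ j < m, coeff j g = 0) (h : PowerSeries A) (NN : ℕ) :
    coeff (m + NN) (h * g)
      = ∑ i ∈ Finset.range (NN + 1), coeff i h * coeff (m + NN - i) g := by
  rw [coeff_mul, Finset.Nat.sum_antidiagonal_eq_sum_range_succ_mk]
  symm
  apply Finset.sum_subset
  · intro i hi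
    simp only [Finset.mem_range] at hi ⊢
    omega
  · intro i hi' hi
    simp only [Finset.mem_range] at hi hi'
    rw [hg (m + NN - i) (by omega), mul_zero]

end Stmt16Aux

open PowerSeries Finset Stmt16Aux in
theorem stmt16 {A : Type*} [CommRing A] (S : Submonoid A)
    (hanti : ∀ s ∈ S, ∃ t ∈ S, ∀ n : ℕ, s ^ n ∣ t)
    (hA : SNoeth S A) :
    SNoeth (S.map (PowerSeries.C (R := A))) (PowerSeries A) := by
  classical
  intro N
  -- the chain of leading coefficient ideals and its union
  have hdir : Directed (· ≤ ·) (fun n => Lmod N n) := fun i j =>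
    ⟨max i j, Lmod_mono (le_max_left _ _), Lmod_mono (le_max_right _ _)⟩
  obtain ⟨F, hFfg, hFle, s₀, hs₀S, hs₀⟩ := hA (⨆ n, Lmod N n)
  obtain ⟨T, hT⟩ := hFfg
  have hTL : ∀ a ∈ T, a ∈ ⨆ n, Lmod N n := fun a ha =>
    hFle (hT ▸ Submodule.subset_span ha)
  have hlev : ∀ a : A, ∃ n : ℕ, a ∈ (⨆ n, Lmod N n) → a ∈ Lmod N n := by
    intro a
    by_cases h : a ∈ ⨆ n, Lmod N n
    · obtain ⟨n, hn⟩ := (Submodule.mem_iSup_of_directed _ hdir).1 h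
      exact ⟨n, fun _ => hn⟩
    · exact ⟨0, fun h' => absurd h' h⟩
  choose lev hlev using hlev
  set m : ℕ := T.sup lev with hm
  have hTm : ∀ a ∈ T, a ∈ Lmod N m := fun a ha =>
    Lmod_mono (Finset.le_sup ha) (hlev a (hTL a ha))
  -- choose representatives g a of order ≥ m with m-th coefficient a
  have hgex : ∀ a : A, ∃ p : PowerSeries A,
      a ∈ Lmod N m → p ∈ Kmod N m ∧ coeff m p = a := by
    intro a
    by_cases h : a ∈ Lmod N m
    · obtain ⟨p, hp, hpa⟩ := h
      exact ⟨p, fun _ => ⟨hp, hpa⟩⟩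
    · exact ⟨0, fun h' => absurd h' h⟩
  choose g hg using hgex
  -- for each level j, an S-finite structure on Lmod N j
  choose F₂ hF₂fg hF₂le s_ hsS hs_ using fun j => hA (Lmod N j)
  choose T₂ hT₂ using hF₂fg
  have hT₂L : ∀ j, ∀ b ∈ T₂ j, b ∈ Lmod N j := fun j b hb =>
    hF₂le j ((hT₂ j) ▸ Submodule.subset_span hb)
  have hg2ex : ∀ (j : ℕ) (a : A), ∃ p : PowerSeries A,
      a ∈ Lmod N j → p ∈ Kmod N j ∧ coeff j p = a := by
    intro j a
    by_cases h : a ∈ Lmod N j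
    · obtain ⟨p, hp, hpa⟩ := h
      exact ⟨p, fun _ => ⟨hp, hpa⟩⟩
    · exact ⟨0, fun h' => absurd h' h⟩
  choose g2 hg2 using hg2ex
  -- the annihilator chain of powers of s₀
  have hAnnmono : ∀ {n n' : ℕ}, n ≤ n' →
      LinearMap.ker (LinearMap.lsmul A A (s₀ ^ n)) ≤
        LinearMap.ker (LinearMap.lsmul A A (s₀ ^ n')) := by
    intro n n' h x hx
    simp only [LinearMap.mem_ker, LinearMap.lsmul_apply, smul_eq_mul] at hx ⊢
    calc s₀ ^ n' * x = s₀ ^ (n' - n) * (s₀ ^ n * x) := by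
          rw [← mul_assoc, ← pow_add]
          congr 2
          omega
      _ = 0 := by rw [hx, mul_zero]
  have hAnndir : Directed (· ≤ ·) (fun n => LinearMap.ker (LinearMap.lsmul A A (s₀ ^ n))) :=
    fun i j => ⟨max i j, hAnnmono (le_max_left _ _), hAnnmono (le_max_right _ _)⟩
  obtain ⟨F₃, hF₃fg, hF₃le, s', hs'S, hs'⟩ :=
    hA (⨆ n, LinearMap.ker (LinearMap.lsmul A A (s₀ ^ n)))
  obtain ⟨T₃, hT₃⟩ := hF₃fg
  have hnbex : ∀ b : A, ∃ n : ℕ,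
      b ∈ (⨆ n, LinearMap.ker (LinearMap.lsmul A A (s₀ ^ n))) → s₀ ^ n * b = 0 := by
    intro b
    by_cases h : b ∈ ⨆ n, LinearMap.ker (LinearMap.lsmul A A (s₀ ^ n))
    · obtain ⟨n, hn⟩ := (Submodule.mem_iSup_of_directed _ hAnndir).1 h
      simp only [LinearMap.mem_ker, LinearMap.lsmul_apply, smul_eq_mul] at hn
      exact ⟨n, fun _ => hn⟩
    · exact ⟨0, fun h' => absurd h' h⟩
  choose nb hnb using hnbex
  set M : ℕ := T₃.sup nb with hM
  have hkill : ∀ x : A, (∃ n, s₀ ^ n * x = 0) → s' * s₀ ^ M * x = 0 := by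
    rintro x ⟨n, hx⟩
    have hxU : x ∈ ⨆ n, LinearMap.ker (LinearMap.lsmul A A (s₀ ^ n)) :=
      (Submodule.mem_iSup_of_directed _ hAnndir).2
        ⟨n, by simp only [LinearMap.mem_ker, LinearMap.lsmul_apply, smul_eq_mul]; exact hx⟩
    have h1 : s' • x ∈ F₃ := hs' x hxU
    have h2 : F₃ ≤ LinearMap.ker (LinearMap.lsmul A A (s₀ ^ M)) := by
      rw [← hT₃, Submodule.span_le]
      intro b hb
      have hbU : b ∈ ⨆ n, LinearMap.ker (LinearMap.lsmul A A (s₀ ^ n)) :=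
        hF₃le (hT₃ ▸ Submodule.subset_span hb)
      have := hnb b hbU
      simp only [SetLike.mem_coe, LinearMap.mem_ker, LinearMap.lsmul_apply, smul_eq_mul]
      calc s₀ ^ M * b = s₀ ^ (M - nb b) * (s₀ ^ nb b * b) := by
            rw [← mul_assoc, ← pow_add]
            congr 2
            have : nb b ≤ M := Finset.le_sup hb
            omega
        _ = 0 := by rw [this, mul_zero]
    have h3 := h2 h1
    simp only [LinearMap.mem_ker, LinearMap.lsmul_apply, smul_eq_mul] at h3
    calc s' * s₀ ^ M * x = s₀ ^ M * (s' * x) := by ring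
      _ = 0 := h3
  -- anti-archimedean element
  obtain ⟨t, htS, htdvd⟩ := hanti s₀ hs₀S
  choose v hv using htdvd
  -- representation function for F = span T
  have hrepex : ∀ x : A, ∃ r : A → A,
      x ∈ (⨆ n, Lmod N n) → s₀ * x = ∑ a ∈ T, r a * a := by
    intro x
    by_cases h : x ∈ ⨆ n, Lmod N n
    · have h1 : s₀ • x ∈ F := hs₀ x h
      rw [← hT] at h1
      obtain ⟨r, -, hr⟩ := Submodule.mem_span_finset.1 h1
      refine ⟨r, fun _ => ?_⟩
      symm
      simpa [smul_eq_mul] using hr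
    · exact ⟨fun _ => 0, fun h' => absurd h' h⟩
  choose rep hrep using hrepex
  -- the finite generating set
  set GG : Finset (PowerSeries A) :=
    T.image g ∪ (Finset.range m).biUnion (fun j => (T₂ j).image (g2 j)) with hGG
  refine ⟨Submodule.span (PowerSeries A) (GG : Set (PowerSeries A)), ⟨GG, rfl⟩, ?_, ?_⟩
  · -- span GG ≤ N
    rw [Submodule.span_le]
    intro p hp
    simp only [hGG, Finset.coe_union, Set.mem_union, Finset.coe_biUnion, Set.mem_iUnion,
      Finset.mem_coe, Finset.mem_image, Finset.mem_range] at hp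
    rcases hp with ⟨a, ha, rfl⟩ | ⟨j, _, b, hb, rfl⟩
    · exact (mem_Kmod.1 (hg a (hTm a ha)).1).1
    · exact (mem_Kmod.1 (hg2 j b (hT₂L j b hb)).1).1
  -- the scalar s
  refine ⟨PowerSeries.C ((∏ j ∈ Finset.range m, s_ j) * (s' * (s₀ ^ M * t))),
    ⟨_, S.mul_mem (Submonoid.prod_mem S fun j _ => hsS j)
      (S.mul_mem hs'S (S.mul_mem (pow_mem hs₀S M) htS)), rfl⟩, ?_⟩
  -- step 2 : the tail argument
  have step2 : ∀ f ∈ Kmod N m, PowerSeries.C (s' * (s₀ ^ M * t)) * f ∈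
      Submodule.span (PowerSeries A) (GG : Set (PowerSeries A)) := by
    intro f hf
    -- the reduction sequence
    let fs : ℕ → PowerSeries A := fun n =>
      Nat.rec f (fun k fk =>
        PowerSeries.C s₀ * fk -
          ∑ a ∈ T, PowerSeries.C (rep (coeff (m + k) fk) a) * (X ^ k * g a)) n
    have fs0 : fs 0 = f := rfl
    have fsS : ∀ k, fs (k + 1) =
        PowerSeries.C s₀ * fs k -
          ∑ a ∈ T, PowerSeries.C (rep (coeff (m + k) (fs k)) a) * (X ^ k * g a) :=
      fun k => rfl
    have hgK : ∀ a ∈ T, g a ∈ Kmod N m := fun a ha => (hg a (hTm a ha)).1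
    have hgc : ∀ a ∈ T, coeff m (g a) = a := fun a ha => (hg a (hTm a ha)).2
    have hfsmem : ∀ k, fs k ∈ Kmod N (m + k) := by
      intro k
      induction k with
      | zero => simpa [fs0] using hf
      | succ k ih =>
        have hsum : (∑ a ∈ T, PowerSeries.C (rep (coeff (m + k) (fs k)) a) * (X ^ k * g a))
            ∈ Kmod N (m + k) :=
          Submodule.sum_mem _ fun a ha => C_mul_mem_Kmod (X_pow_mul_mem_Kmod (hgK a ha) k) _
        have h1 : fs (k + 1) ∈ Kmod N (m + k) := by
          rw [fsS k]
          exact sub_mem (C_mul_mem_Kmod ih s₀) hsum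
        rw [mem_Kmod] at h1 ⊢
        refine ⟨h1.1, fun i hi => ?_⟩
        rcases lt_or_ge i (m + k) with h | h
        · exact h1.2 i h
        · have hik : i = m + k := by omega
          subst hik
          have hcfL : coeff (m + k) (fs k) ∈ ⨆ n, Lmod N n :=
            le_iSup (fun n => Lmod N n) (m + k) ⟨fs k, ih, rfl⟩
          have hr := hrep (coeff (m + k) (fs k)) hcfL
          rw [fsS k, map_sub, coeff_C_mul, map_sum]
          have : ∀ a ∈ T,
              coeff (m + k) (PowerSeries.C (rep (coeff (m + k) (fs k)) a) * (X ^ k * g a))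
                = rep (coeff (m + k) (fs k)) a * a := by
            intro a ha
            rw [coeff_C_mul, coeff_X_pow_mul, hgc a ha]
          rw [Finset.sum_congr rfl this, ← hr, sub_self]
    -- telescoping identity
    have tel : ∀ NN, (PowerSeries.C s₀) ^ (NN + 1) * f =
        fs (NN + 1) + ∑ n ∈ Finset.range (NN + 1), (PowerSeries.C s₀) ^ (NN - n) *
          (∑ a ∈ T, PowerSeries.C (rep (coeff (m + n) (fs n)) a) * (X ^ n * g a)) := by
      intro NN
      induction NN with
      | zero =>
        rw [fsS 0, Finset.sum_range_one, fs0]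
        simp only [Nat.sub_self, pow_zero, one_mul, pow_one]
        ring
      | succ NN ih =>
        have e1 : (PowerSeries.C s₀) ^ (NN + 1 + 1) * f =
            PowerSeries.C s₀ * ((PowerSeries.C s₀) ^ (NN + 1) * f) := by ring
        rw [e1, ih, fsS (NN + 1)]
        conv_rhs => rw [Finset.sum_range_succ]
        have e2 : ∀ n ∈ Finset.range (NN + 1),
            PowerSeries.C s₀ * ((PowerSeries.C s₀) ^ (NN - n) *
              (∑ a ∈ T, PowerSeries.C (rep (coeff (m + n) (fs n)) a) * (X ^ n * g a)))
            = (PowerSeries.C s₀) ^ (NN + 1 - n) *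
              (∑ a ∈ T, PowerSeries.C (rep (coeff (m + n) (fs n)) a) * (X ^ n * g a)) := by
          intro n hn
          rw [Finset.mem_range] at hn
          rw [show NN + 1 - n = (NN - n) + 1 by omega, pow_succ]
          ring
        have hsum : ∑ n ∈ Finset.range (NN + 1),
            PowerSeries.C s₀ * ((PowerSeries.C s₀) ^ (NN - n) *
              (∑ a ∈ T, PowerSeries.C (rep (coeff (m + n) (fs n)) a) * (X ^ n * g a)))
            = ∑ n ∈ Finset.range (NN + 1), (PowerSeries.C s₀) ^ (NN + 1 - n) *
              (∑ a ∈ T, PowerSeries.C (rep (coeff (m + n) (fs n)) a) * (X ^ n * g a)) :=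
          Finset.sum_congr rfl e2
        rw [mul_add, Finset.mul_sum, hsum]
        simp only [Nat.sub_self, pow_zero, one_mul]
        ring
    -- the coefficient identity
    have coeffid : ∀ NN, s₀ ^ (NN + 1) * coeff (m + NN) f =
        ∑ n ∈ Finset.range (NN + 1), s₀ ^ (NN - n) *
          ∑ a ∈ T, rep (coeff (m + n) (fs n)) a * coeff (m + NN - n) (g a) := by
      intro NN
      have h0 := congrArg (coeff (m + NN)) (tel NN)
      rw [← map_pow, coeff_C_mul, map_add, map_sum] at h0
      have hz : coeff (m + NN) (fs (NN + 1)) = 0 :=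
        (mem_Kmod.1 (hfsmem (NN + 1))).2 (m + NN) (by omega)
      have hterm : ∀ n ∈ Finset.range (NN + 1),
          coeff (m + NN) ((PowerSeries.C s₀) ^ (NN - n) *
            (∑ a ∈ T, PowerSeries.C (rep (coeff (m + n) (fs n)) a) * (X ^ n * g a)))
          = s₀ ^ (NN - n) *
            ∑ a ∈ T, rep (coeff (m + n) (fs n)) a * coeff (m + NN - n) (g a) := by
        intro n hn
        rw [Finset.mem_range] at hn
        rw [← map_pow, coeff_C_mul, map_sum]
        congr 1
        apply Finset.sum_congr rfl
        intro a _
        rw [coeff_C_mul]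
        congr 1
        have e : m + NN = (m + NN - n) + n := by omega
        conv_lhs => rw [e, coeff_X_pow_mul]
      rw [hz, zero_add, Finset.sum_congr rfl hterm] at h0
      exact h0
    -- the exact division identity
    have key : PowerSeries.C (s' * (s₀ ^ M * t)) * f =
        ∑ a ∈ T, (PowerSeries.mk fun n =>
          s' * s₀ ^ M * v (n + 1) * rep (coeff (m + n) (fs n)) a) * g a := by
      ext d
      rw [coeff_C_mul, map_sum]
      rcases lt_or_ge d m with hd | hd
      · rw [(mem_Kmod.1 hf).2 d hd, mul_zero]
        symm
        apply Finset.sum_eq_zero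
        intro a ha
        rw [coeff_mul]
        apply Finset.sum_eq_zero
        rintro ⟨i, j⟩ hij
        rw [Finset.HasAntidiagonal.mem_antidiagonal] at hij
        rw [(mem_Kmod.1 (hgK a ha)).2 j (by omega), mul_zero]
      · obtain ⟨NN, rfl⟩ : ∃ NN, d = m + NN := ⟨d - m, by omega⟩
        have hR : ∀ a ∈ T,
            coeff (m + NN) ((PowerSeries.mk fun n =>
              s' * s₀ ^ M * v (n + 1) * rep (coeff (m + n) (fs n)) a) * g a)
            = ∑ n ∈ Finset.range (NN + 1),
                s' * s₀ ^ M * v (n + 1) * rep (coeff (m + n) (fs n)) a *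
                  coeff (m + NN - n) (g a) := by
          intro a ha
          rw [coeff_mul_of_low_zero (mem_Kmod.1 (hgK a ha)).2]
          simp only [coeff_mk]
        rw [Finset.sum_congr rfl hR]
        calc s' * (s₀ ^ M * t) * coeff (m + NN) f
            = s' * s₀ ^ M * v (NN + 1) * (s₀ ^ (NN + 1) * coeff (m + NN) f) := by
              rw [hv (NN + 1)]; ring
          _ = s' * s₀ ^ M * v (NN + 1) * ∑ n ∈ Finset.range (NN + 1), s₀ ^ (NN - n) *
                ∑ a ∈ T, rep (coeff (m + n) (fs n)) a * coeff (m + NN - n) (g a) := by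
              rw [coeffid NN]
          _ = ∑ n ∈ Finset.range (NN + 1), ∑ a ∈ T,
                s' * s₀ ^ M * (v (NN + 1) * s₀ ^ (NN - n)) *
                  (rep (coeff (m + n) (fs n)) a * coeff (m + NN - n) (g a)) := by
              simp only [Finset.mul_sum]
              refine Finset.sum_congr rfl fun n _ => Finset.sum_congr rfl fun a _ => by ring
          _ = ∑ n ∈ Finset.range (NN + 1), ∑ a ∈ T,
                s' * s₀ ^ M * v (n + 1) *
                  (rep (coeff (m + n) (fs n)) a * coeff (m + NN - n) (g a)) := by
              refine Finset.sum_congr rfl fun n hn => ?_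
              rw [Finset.mem_range] at hn
              refine Finset.sum_congr rfl fun a _ => ?_
              have hz : s₀ ^ (n + 1) * (v (NN + 1) * s₀ ^ (NN - n) - v (n + 1)) = 0 := by
                have e1 : s₀ ^ (n + 1) * (v (NN + 1) * s₀ ^ (NN - n))
                    = s₀ ^ (NN + 1) * v (NN + 1) := by
                  rw [show NN + 1 = (n + 1) + (NN - n) by omega, pow_add]
                  ring
                have e2 := hv (NN + 1)
                have e3 := hv (n + 1)
                rw [mul_sub, e1, ← e2, ← e3]
                ring
              have h4 := hkill _ ⟨n + 1, hz⟩
              have h5 : s' * s₀ ^ M * (v (NN + 1) * s₀ ^ (NN - n))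
                  = s' * s₀ ^ M * v (n + 1) := by linear_combination h4
              rw [h5]
          _ = ∑ a ∈ T, ∑ n ∈ Finset.range (NN + 1),
                s' * s₀ ^ M * v (n + 1) * rep (coeff (m + n) (fs n)) a *
                  coeff (m + NN - n) (g a) := by
              rw [Finset.sum_comm]
              refine Finset.sum_congr rfl fun a _ => ?_
              refine Finset.sum_congr rfl fun n _ => ?_
              ring
    rw [key]
    refine Submodule.sum_mem _ fun a ha => ?_
    have hmem : g a ∈ (GG : Set (PowerSeries A)) := by
      simp only [hGG, Finset.coe_union, Set.mem_union, Finset.mem_coe, Finset.mem_image]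
      exact Or.inl ⟨a, ha, rfl⟩
    have := Submodule.smul_mem (Submodule.span (PowerSeries A) (GG : Set (PowerSeries A)))
      (PowerSeries.mk fun n => s' * s₀ ^ M * v (n + 1) * rep (coeff (m + n) (fs n)) a)
      (Submodule.subset_span hmem)
    simpa [smul_eq_mul] using this
  -- step 1 : reduction below order m
  have step1 : ∀ k j, j + k = m → ∀ f ∈ Kmod N j,
      ∃ f' ∈ Kmod N m, PowerSeries.C (∏ i ∈ Finset.Ico j m, s_ i) * f - f' ∈
        Submodule.span (PowerSeries A) (GG : Set (PowerSeries A)) := by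
    intro k
    induction k with
    | zero =>
      intro j hj f hf
      have hjm : j = m := by omega
      subst hjm
      refine ⟨f, hf, ?_⟩
      simp only [Finset.Ico_self, Finset.prod_empty, map_one, one_mul, sub_self]
      exact Submodule.zero_mem _
    | succ k ih =>
      intro j hj f hf
      have hjm : j < m := by omega
      have hcf : coeff j f ∈ Lmod N j := ⟨f, hf, rfl⟩
      have h1 : s_ j • coeff j f ∈ F₂ j := hs_ j _ hcf
      rw [← hT₂ j] at h1
      obtain ⟨r, -, hr⟩ := Submodule.mem_span_finset.1 h1
      set f₁ : PowerSeries A :=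
        PowerSeries.C (s_ j) * f - ∑ b ∈ T₂ j, PowerSeries.C (r b) * g2 j b with hf₁
      have hg2K : ∀ b ∈ T₂ j, g2 j b ∈ Kmod N j := fun b hb => (hg2 j b (hT₂L j b hb)).1
      have hg2c : ∀ b ∈ T₂ j, coeff j (g2 j b) = b := fun b hb => (hg2 j b (hT₂L j b hb)).2
      have hf₁mem : f₁ ∈ Kmod N (j + 1) := by
        have hKj : f₁ ∈ Kmod N j :=
          sub_mem (C_mul_mem_Kmod hf _)
            (Submodule.sum_mem _ fun b hb => C_mul_mem_Kmod (hg2K b hb) _)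
        rw [mem_Kmod] at hKj ⊢
        refine ⟨hKj.1, fun i hi => ?_⟩
        rcases lt_or_ge i j with h | h
        · exact hKj.2 i h
        · have hij : i = j := by omega
          subst hij
          rw [hf₁, map_sub, coeff_C_mul, map_sum]
          have h6 : ∀ b ∈ T₂ i, coeff i (PowerSeries.C (r b) * g2 i b) = r b * b := by
            intro b hb
            rw [coeff_C_mul, hg2c b hb]
          rw [Finset.sum_congr rfl h6]
          have h7 : ∑ b ∈ T₂ i, r b * b = s_ i * coeff i f := by
            simpa [smul_eq_mul] using hr
          rw [h7, sub_self]
      obtain ⟨f', hf', hspan⟩ := ih (j + 1) (by omega) f₁ hf₁mem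
      refine ⟨f', hf', ?_⟩
      have hprod : (∏ i ∈ Finset.Ico j m, s_ i) = s_ j * ∏ i ∈ Finset.Ico (j + 1) m, s_ i :=
        Finset.prod_eq_prod_Ico_succ_bot hjm _
      have hSig : ∑ b ∈ T₂ j, PowerSeries.C (∏ i ∈ Finset.Ico (j + 1) m, s_ i) *
            (PowerSeries.C (r b) * g2 j b)
          = ∑ b ∈ T₂ j, (PowerSeries.C (∏ i ∈ Finset.Ico (j + 1) m, s_ i) *
            PowerSeries.C (r b)) * g2 j b := by
        refine Finset.sum_congr rfl fun b _ => ?_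
        ring
      have expand : PowerSeries.C (∏ i ∈ Finset.Ico j m, s_ i) * f - f' =
          (PowerSeries.C (∏ i ∈ Finset.Ico (j + 1) m, s_ i) * f₁ - f') +
            ∑ b ∈ T₂ j, (PowerSeries.C (∏ i ∈ Finset.Ico (j + 1) m, s_ i) *
              PowerSeries.C (r b)) * g2 j b := by
        rw [hprod, map_mul, hf₁, mul_sub, Finset.mul_sum, hSig]
        ring
      rw [expand]
      refine Submodule.add_mem _ hspan (Submodule.sum_mem _ fun b hb => ?_)
      have hmem : g2 j b ∈ (GG : Set (PowerSeries A)) := by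
        simp only [hGG, Finset.coe_union, Set.mem_union, Finset.mem_coe, Finset.mem_biUnion,
          Finset.mem_range, Finset.mem_image]
        exact Or.inr ⟨j, hjm, b, hb, rfl⟩
      have := Submodule.smul_mem (Submodule.span (PowerSeries A) (GG : Set (PowerSeries A)))
        (PowerSeries.C (∏ i ∈ Finset.Ico (j + 1) m, s_ i) * PowerSeries.C (r b))
        (Submodule.subset_span hmem)
      simpa [smul_eq_mul] using this
  -- final assembly
  intro x hx
  rw [smul_eq_mul]
  have hx0 : x ∈ Kmod N 0 := mem_Kmod.2 ⟨hx, fun i hi => absurd hi (Nat.not_lt_zero i)⟩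
  obtain ⟨f', hf', hspan⟩ := step1 m 0 (by omega) x hx0
  have h2 := step2 f' hf'
  have expand : PowerSeries.C ((∏ j ∈ Finset.range m, s_ j) * (s' * (s₀ ^ M * t))) * x =
      PowerSeries.C (s' * (s₀ ^ M * t)) *
        (PowerSeries.C (∏ i ∈ Finset.Ico 0 m, s_ i) * x - f') +
        PowerSeries.C (s' * (s₀ ^ M * t)) * f' := by
    rw [map_mul, Finset.range_eq_Ico]
    ring
  rw [expand]
  refine Submodule.add_mem _ ?_ h2
  have := Submodule.smul_mem (Submodule.span (PowerSeries A) (GG : Set (PowerSeries A)))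
    (PowerSeries.C (s' * (s₀ ^ M * t))) hspan
  simpa [smul_eq_mul] using this
end

section
/- Let A be an S-noetherian commutative ring for a multiplicatively closed S ⊆ A, and Σ ⊆ A another multiplicatively closed subset. Then the localization A_Σ is S'-noetherian, where S' is the image of S in A_Σ. -/
theorem stmt17 {A : Type*} [CommRing A] (S T : Submonoid A) (hA : SNoeth S A) :
    SNoeth (S.map (algebraMap A (Localization T))) (Localization T) := by
  intro N
  set f := algebraMap A (Localization T) with hf
  -- view N as an ideal
  obtain ⟨F, hFfg, hFc, s, hs, hsF⟩ := hA (Ideal.comap f (N : Ideal (Localization T)))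
  refine ⟨Ideal.map f F, Ideal.FG.map hFfg f, ?_, f s, ⟨s, hs, rfl⟩, ?_⟩
  · exact Ideal.map_le_iff_le_comap.mpr hFc
  · intro x hx
    obtain ⟨⟨a, t⟩, ht⟩ := IsLocalization.surj T x
    have ha : a ∈ Ideal.comap f (N : Ideal (Localization T)) := by
      simp only [Ideal.mem_comap]
      rw [← ht]
      exact Ideal.mul_mem_right _ _ hx
    have hmem : f (s * a) ∈ Ideal.map f F := Ideal.mem_map_of_mem f (hsF a ha)
    have hu : IsUnit (f t) := IsLocalization.map_units (Localization T) t
    obtain ⟨u, hu⟩ := hu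
    have : f s • x = ↑u⁻¹ * f (s * a) := by
      rw [map_mul, ← ht, smul_eq_mul, ← hu, eq_comm, Units.inv_mul_eq_iff_eq_mul]
      ring
    rw [this]
    exact Ideal.mul_mem_left _ _ hmem
end

section
/- (Relative Kaplansky theorem) Let A be a commutative ring and S ⊆ A a multiplicatively closed subset. Then every ideal of A is S-principal if and only if every prime ideal p of A with p ∩ S = ∅ is S-principal. -/
/-- An ideal `I` is `S`-principal if there are `a ∈ I` and `s ∈ S` with
`I·s ⊆ aA ⊆ I`. -/
def SPrincipal {A : Type*} [CommRing A] (S : Submonoid A) (I : Ideal A) : Prop :=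
  ∃ a ∈ I, ∃ s ∈ S, ∀ x ∈ I, s * x ∈ Ideal.span {a}

lemma sprincipal_of_mem {A : Type*} [CommRing A] (S : Submonoid A) (I : Ideal A)
    {s : A} (hsS : s ∈ S) (hsI : s ∈ I) : SPrincipal S I :=
  ⟨s, hsI, s, hsS, fun x _ => Ideal.mem_span_singleton.mpr ⟨x, rfl⟩⟩

theorem stmt19 {A : Type*} [CommRing A] (S : Submonoid A) :
    (∀ I : Ideal A, SPrincipal S I) ↔
      (∀ p : Ideal A, p.IsPrime → (∀ s ∈ S, s ∉ p) → SPrincipal S p) := by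
  constructor
  · intro h p _ _; exact h p
  · intro h
    by_contra hcon
    push_neg at hcon
    obtain ⟨I, hI⟩ := hcon
    -- Zorn's lemma on the set of non-S-principal ideals
    set 𝒮 : Set (Ideal A) := {J | ¬ SPrincipal S J} with h𝒮
    obtain ⟨P, -, hPmax⟩ :=
      zorn_le_nonempty₀ 𝒮 (fun c hc hchain J hJ => by
        refine ⟨sSup c, ?_, fun z hz => le_sSup hz⟩
        intro ⟨a, ha, s, hsS, hs⟩
        have hdir : DirectedOn (· ≤ ·) c := hchain.directedOn
        obtain ⟨K, hKc, haK⟩ :=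
          (Submodule.mem_sSup_of_directed ⟨J, hJ⟩ hdir).mp ha
        exact hc hKc ⟨a, haK, s, hsS, fun x hx => hs x (le_sSup hKc hx)⟩) I hI
    have hP𝒮 : P ∈ 𝒮 := hPmax.1
    -- P is prime
    have hPne : P ≠ ⊤ := by
      rintro rfl
      exact hP𝒮 (sprincipal_of_mem S ⊤ S.one_mem trivial)
    have hprime : P.IsPrime := by
      refine ⟨hPne, ?_⟩
      intro a b hab
      by_contra hn
      push_neg at hn
      obtain ⟨haP, hbP⟩ := hn
      -- P ⊔ (a) is strictly bigger, hence S-principal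
      have h1 : SPrincipal S (P ⊔ Ideal.span {a}) := by
        by_contra hns
        have := (hPmax.eq_of_ge hns le_sup_left).symm
        exact haP (this ▸ Ideal.mem_sup_right (Ideal.subset_span rfl))
      obtain ⟨c, hc, s, hsS, hs⟩ := h1
      -- Q = (P : c)
      set Q : Ideal A := P.colon (Ideal.span {c}) with hQ
      have hPQ : P ≤ Q := fun p hp =>
        Ideal.mem_colon_span_singleton.mpr (Ideal.mul_mem_right _ _ hp)
      have hbQ : b ∈ Q := by
        rw [hQ, Ideal.mem_colon_span_singleton]
        obtain ⟨p, hp, z, hz, hpz⟩ := Submodule.mem_sup.mp hc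
        obtain ⟨r, rfl⟩ := Ideal.mem_span_singleton.mp hz
        rw [← hpz, mul_add]
        refine P.add_mem (Ideal.mul_mem_left _ _ hp) ?_
        have : b * (a * r) = a * b * r := by ring
        rw [this]
        exact Ideal.mul_mem_right _ _ hab
      have h2 : SPrincipal S Q := by
        by_contra hns
        exact hbP ((hPmax.eq_of_ge hns hPQ) ▸ hbQ)
      obtain ⟨d, hd, t, htS, ht⟩ := h2
      -- P is S-principal with witness c*d and s*t : contradiction
      refine hP𝒮 ⟨c * d, ?_, s * t, S.mul_mem hsS htS, ?_⟩
      · have := Ideal.mem_colon_span_singleton.mp hd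
        rwa [mul_comm]
      · intro x hx
        obtain ⟨u, hu⟩ := Ideal.mem_span_singleton.mp (hs x (Ideal.mem_sup_left hx))
        have huQ : u ∈ Q := by
          rw [hQ, Ideal.mem_colon_span_singleton, mul_comm, ← hu]
          exact Ideal.mul_mem_left _ _ hx
        obtain ⟨v, hv⟩ := Ideal.mem_span_singleton.mp (ht u huQ)
        refine Ideal.mem_span_singleton.mpr ⟨v, ?_⟩
        calc s * t * x = t * (s * x) := by ring
          _ = t * (c * u) := by rw [hu]
          _ = c * (t * u) := by ring
          _ = c * (d * v) := by rw [hv]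
          _ = c * d * v := by ring
    -- P is disjoint from S
    have hdisj : ∀ s ∈ S, s ∉ P := fun s hsS hsP =>
      hP𝒮 (sprincipal_of_mem S P hsS hsP)
    exact hP𝒮 (h P hprime hdisj)
end
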